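/- arXiv:1505.06929 — 5 statements merged into one kernel-verified Lean document; each statement's English description precedes it below -/
import Mathlib

section
/- If a functor G from Q≥0^r (the poset of r-tuples of non-negative rationals) to a category C is α-tame (i.e., isomorphic to the left Kan extension along multiplication by α of a functor indexed by N^r), then G is α/n-tame for any positive natural number n. -/
open CategoryTheory CategoryTheory.Limits

attribute [local instance 2000] Preorder.smallCategory

/-- The poset of `r`-tuples of non-negative rational numbers, with the componentwise order. -/
abbrev Qr (r : ℕ) := Fin r → ℚ≥0

/-- The poset of `r`-tuples of natural numbers, with the componentwise order. -/
abbrev Nr (r : ℕ) := Fin r → ℕ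

/-- `bfloor α v = join {w ∈ ℕ^r | α w ≤ v}`, computed componentwise as `⌊vᵢ/α⌋`. -/
def bfloor (α : ℚ≥0) {r : ℕ} (v : Qr r) : Nr r := fun i => Nat.floor ((v i : ℚ) / (α : ℚ))

/-- The embedding `α : ℕ^r → ℚ≥0^r`, `w ↦ α w`. -/
def embQ (α : ℚ≥0) {r : ℕ} (w : Nr r) : Qr r := fun i => α * (w i : ℚ≥0)

theorem bfloor_mono (α : ℚ≥0) (r : ℕ) : Monotone (bfloor α (r := r)) := by
  intro v w h i
  exact Nat.floor_mono (by gcongr; exact_mod_cast h i)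

theorem embQ_mono (α : ℚ≥0) (r : ℕ) : Monotone (embQ α (r := r)) := by
  intro v w h i
  dsimp [embQ]
  gcongr
  exact_mod_cast h i

/-- A functor `G : ℚ≥0^r ⥤ C` is `α`-tame if `G(α bα v ≤ v)` is an isomorphism for every `v`,
i.e. `G` is (isomorphic to) the left Kan extension along `α : ℕ^r → ℚ≥0^r` of its restriction;
equivalently, `G` is constant on the fundamental domains of `α`. -/
def IsAlphaTame {C : Type*} [Category C] (α : ℚ≥0) {r : ℕ} (G : Qr r ⥤ C) : Prop :=
  ∀ (v : Qr r) (h : embQ α (bfloor α v) ≤ v), IsIso (G.map (homOfLE h))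

/-- A functor is tame if it is `α`-tame for some positive rational `α`. -/
def IsTame {C : Type*} [Category C] {r : ℕ} (G : Qr r ⥤ C) : Prop :=
  ∃ α : ℚ≥0, 0 < α ∧ IsAlphaTame α G

/-- If `G : ℚ≥0^r ⥤ C` is `α`-tame, then it is `α/n`-tame for every positive natural `n`. -/
theorem alphaTame_div {C : Type*} [Category C] {r : ℕ} (α : ℚ≥0) (hα : 0 < α)
    (G : Qr r ⥤ C) (hG : IsAlphaTame α G) (n : ℕ) (hn : 0 < n) :
    IsAlphaTame (α / n) G := by
  intro v h
  have hαQ : (0:ℚ) < (α:ℚ) := by exact_mod_cast hα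
  have hnQ : (0:ℚ) < (n:ℚ) := by exact_mod_cast hn
  set u := embQ (α / n) (bfloor (α / n) v) with hu
  have hcast : ∀ i, ((u i : ℚ)) = (α:ℚ)/(n:ℚ) * (bfloor (α/n) v i : ℚ) := by
    intro i; simp [hu, embQ]
  have hm : ∀ i, (bfloor (α/n) v i : ℕ) = Nat.floor ((v i : ℚ) * n / α) := by
    intro i
    simp only [bfloor]
    congr 1
    push_cast
    rw [div_div_eq_mul_div]
  have hkey : bfloor α u = bfloor α v := by
    funext i
    simp only [bfloor]
    rw [hcast i, hm i]
    have e1 : (α:ℚ)/n * (⌊(v i:ℚ)*n/α⌋₊:ℚ) / α = (⌊(v i:ℚ)*n/α⌋₊:ℚ)/n := by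
      field_simp
    have e2 : (v i:ℚ)/α = ((v i:ℚ)*n/α)/n := by field_simp
    rw [e1, Nat.floor_div_natCast, Nat.floor_natCast, e2, Nat.floor_div_natCast]
  have h1 : embQ α (bfloor α v) ≤ u := by
    intro i
    rw [← NNRat.coe_le_coe]
    rw [hcast i, hm i]
    have hL : ((embQ α (bfloor α v) i : ℚ)) = (α:ℚ) * (⌊(v i:ℚ)/α⌋₊:ℚ) := by
      simp [embQ, bfloor]
    have eR : (α:ℚ)/n * (⌊(v i:ℚ)*n/α⌋₊:ℚ) = (α:ℚ) * ((⌊(v i:ℚ)*n/α⌋₊:ℚ)/n) := by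
      ring
    rw [hL, eR]
    apply mul_le_mul_of_nonneg_left _ hαQ.le
    rw [le_div_iff₀ hnQ, ← Nat.cast_mul]
    exact_mod_cast Nat.le_floor (by
      rw [Nat.cast_mul]
      calc ((Nat.floor ((v i : ℚ)/α) : ℚ)) * n ≤ ((v i : ℚ)/α) * n := by
            gcongr; exact Nat.floor_le (by positivity)
        _ = (v i : ℚ) * n / α := by ring)
  have h1' : embQ α (bfloor α u) ≤ u := by rw [hkey]; exact h1
  have i0 : IsIso (G.map (homOfLE h1')) := hG u h1'
  have he : embQ α (bfloor α v) = embQ α (bfloor α u) := by rw [hkey]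
  have hdec : homOfLE h1 = eqToHom he ≫ homOfLE h1' := Subsingleton.elim _ _
  have i1 : IsIso (G.map (homOfLE h1)) := by
    rw [hdec, G.map_comp]; infer_instance
  have hv : embQ α (bfloor α v) ≤ v := le_trans h1 h
  have i2 : IsIso (G.map (homOfLE hv)) := hG v hv
  have heq : homOfLE hv = homOfLE h1 ≫ homOfLE h := Subsingleton.elim _ _
  rw [heq, G.map_comp] at i2
  exact IsIso.of_isIso_comp_left (G.map (homOfLE h1)) (G.map (homOfLE h))
end

section
/- The tame functors from Q≥0^r to Vect_K form an abelian subcategory of Fun(Q≥0^r, Vect_K): in any short exact sequence 0 → F → G → H → 0 of functors, if two of F, G, H are tame then so is the third, and finite direct sums of tame functors are tame. -/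
open CategoryTheory CategoryTheory.Limits

set_option synthInstance.maxHeartbeats 1000000
set_option maxHeartbeats 1000000

attribute [local instance 2000] Preorder.smallCategory

lemma embQ_bfloor_le (α : ℚ≥0) {r : ℕ} (v : Qr r) : embQ α (bfloor α v) ≤ v := by
  intro i
  rcases eq_or_lt_of_le α.coe_nonneg with h0 | h0
  · simp [embQ, show α = 0 by exact_mod_cast h0.symm]
  · rw [← NNRat.coe_le_coe]
    push_cast [embQ, bfloor]
    have hx : (0:ℚ) ≤ (v i : ℚ) / (α : ℚ) := div_nonneg (v i).coe_nonneg α.coe_nonneg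
    calc (α:ℚ) * (⌊(v i : ℚ) / (α : ℚ)⌋₊ : ℚ) ≤ (α:ℚ) * ((v i : ℚ) / (α : ℚ)) := by
          gcongr; exact Nat.floor_le hx
      _ = (v i : ℚ) := by field_simp

lemma bfloor_embQ_div {α : ℚ≥0} (hα : 0 < α) {r : ℕ} (n : ℕ) (hn : 0 < n) (v : Qr r) :
    bfloor α (embQ (α / n) (bfloor (α / n) v)) = bfloor α v := by
  funext i
  have hα' : (α:ℚ) ≠ 0 := by exact_mod_cast hα.ne'
  have hn' : (n:ℚ) ≠ 0 := by exact_mod_cast hn.ne'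
  set x : ℚ := (v i : ℚ) / (α : ℚ) with hxdef
  have h1 : ((v i : ℚ)) / (((α / n : ℚ≥0)) : ℚ) = n * x := by
    push_cast
    rw [hxdef, div_div_eq_mul_div, mul_comm ((v i : ℚ)) (n:ℚ), mul_div_assoc]
  show Nat.floor ((((α / n : ℚ≥0) * (Nat.floor ((v i : ℚ) / ((α / n : ℚ≥0) : ℚ)) : ℚ≥0)) : ℚ) / (α:ℚ)) = Nat.floor x
  rw [h1]
  have h2 : (((α / n : ℚ≥0) * ((⌊n * x⌋₊ : ℚ≥0))) : ℚ) / (α:ℚ) = (⌊n * x⌋₊ : ℚ) / n := by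
    push_cast
    rw [div_mul_eq_mul_div, div_div, mul_comm (n:ℚ) (α:ℚ), ← div_div,
      mul_div_cancel_left₀ _ hα']
  rw [h2]
  have h3 : ⌊(⌊n * x⌋₊ : ℚ) / (n:ℚ)⌋₊ = ⌊n * x⌋₊ / n := by
    rw [Nat.floor_div_natCast, Nat.floor_natCast]
  have h4 : ⌊n * x⌋₊ / n = ⌊x⌋₊ := by
    rw [← Nat.floor_div_natCast (n * x) n, mul_div_cancel_left₀ x hn']
  rw [h3, h4]


lemma IsAlphaTame.isIso_map {C : Type*} [Category C] {α : ℚ≥0} {r : ℕ} {G : Qr r ⥤ C}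
    (hG : IsAlphaTame α G) {u v : Qr r} (huv : u ≤ v) (hbf : bfloor α u = bfloor α v) :
    IsIso (G.map (homOfLE huv)) := by
  have hau : embQ α (bfloor α u) ≤ u := embQ_bfloor_le α u
  have hav' : embQ α (bfloor α u) ≤ v := le_trans hau huv
  have he : embQ α (bfloor α u) = embQ α (bfloor α v) := by rw [hbf]
  have big : IsIso (G.map (homOfLE hav')) := by
    have : ∀ (w : Qr r) (hw : w = embQ α (bfloor α v)) (h : w ≤ v),
        IsIso (G.map (homOfLE h)) := by
      rintro w rfl h
      exact hG v h
    exact this _ he hav'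
  haveI h1 : IsIso (G.map (homOfLE hau)) := hG u hau
  have comp : G.map (homOfLE hau) ≫ G.map (homOfLE huv) = G.map (homOfLE hav') := by
    rw [← G.map_comp]
    rfl
  haveI : IsIso (G.map (homOfLE hau) ≫ G.map (homOfLE huv)) := by rw [comp]; exact big
  exact IsIso.of_isIso_comp_left (G.map (homOfLE hau)) (G.map (homOfLE huv))

lemma IsAlphaTame.div {C : Type*} [Category C] {α : ℚ≥0} (hα : 0 < α) {r : ℕ} {G : Qr r ⥤ C}
    (hG : IsAlphaTame α G) (n : ℕ) (hn : 0 < n) : IsAlphaTame (α / n) G := by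
  intro v h
  exact hG.isIso_map h (bfloor_embQ_div hα n hn v)

lemma exists_common_scale {C : Type*} [Category C] {r : ℕ} {F G : Qr r ⥤ C}
    (hF : IsTame F) (hG : IsTame G) :
    ∃ γ : ℚ≥0, 0 < γ ∧ IsAlphaTame γ F ∧ IsAlphaTame γ G := by
  obtain ⟨α, hα, hFα⟩ := hF
  obtain ⟨β, hβ, hGβ⟩ := hG
  set q : ℚ≥0 := α / β with hq
  have hqpos : 0 < q := div_pos hα hβ
  have hm : 0 < q.num := NNRat.num_pos.mpr hqpos
  have hn : 0 < q.den := q.den_pos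
  refine ⟨α / q.num, ?_, ?_, ?_⟩
  · exact div_pos hα (by exact_mod_cast hm)
  · exact hFα.div hα q.num hm
  · have key : α / (q.num : ℚ≥0) = β / (q.den : ℚ≥0) := by
      rw [div_eq_div_iff (by exact_mod_cast hm.ne') (by exact_mod_cast hn.ne')]
      show α * (q.den : ℚ≥0) = β * (q.num : ℚ≥0)
      have := NNRat.mul_den_eq_num q
      calc α * (q.den : ℚ≥0) = (q * β) * q.den := by
            rw [hq, div_mul_cancel₀ _ hβ.ne']
        _ = (q * q.den) * β := by ring
        _ = (q.num : ℚ≥0) * β := by rw [this]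
        _ = β * (q.num : ℚ≥0) := mul_comm _ _
    rw [key]
    exact hGβ.div hβ q.den hn

section Chase
variable {K : Type} [Field K]

lemma mc_comp_apply {A B C : ModuleCat K} (f : A ⟶ B) (g : B ⟶ C) (x : A) :
    (f ≫ g) x = g (f x) := rfl

lemma chase {S₁ S₂ : ShortComplex (ModuleCat K)} (φ : S₁ ⟶ S₂)
    (h₁ : S₁.ShortExact) (h₂ : S₂.ShortExact) :
    (IsIso φ.τ₂ → IsIso φ.τ₃ → IsIso φ.τ₁) ∧ (IsIso φ.τ₁ → IsIso φ.τ₂ → IsIso φ.τ₃) := by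
  have hf₁ : Function.Injective S₁.f := h₁.moduleCat_injective_f
  have hg₁ : Function.Surjective S₁.g := h₁.moduleCat_surjective_g
  have hex₁ := (ShortComplex.moduleCat_exact_iff S₁).mp h₁.exact
  have hf₂ : Function.Injective S₂.f := h₂.moduleCat_injective_f
  have hg₂ : Function.Surjective S₂.g := h₂.moduleCat_surjective_g
  have hex₂ := (ShortComplex.moduleCat_exact_iff S₂).mp h₂.exact
  have comm₁₂ : ∀ x, φ.τ₂ (S₁.f x) = S₂.f (φ.τ₁ x) := by
    intro x
    have := φ.comm₁₂
    have := congrArg (fun (ψ : S₁.X₁ ⟶ S₂.X₂) => ψ x) this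
    simpa [mc_comp_apply] using this.symm
  have comm₂₃ : ∀ x, φ.τ₃ (S₁.g x) = S₂.g (φ.τ₂ x) := by
    intro x
    have := φ.comm₂₃
    have := congrArg (fun (ψ : S₁.X₂ ⟶ S₂.X₃) => ψ x) this
    simpa [mc_comp_apply] using this.symm
  constructor
  · intro i₂ i₃
    rw [ConcreteCategory.isIso_iff_bijective] at i₂ i₃ ⊢
    constructor
    · apply (injective_iff_map_eq_zero (φ.τ₁.hom : S₁.X₁ →ₗ[K] S₂.X₁)).mpr
      intro x hx
      apply hf₁
      apply i₂.injective
      rw [comm₁₂, hx, map_zero, map_zero, map_zero]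
    · intro x'
      obtain ⟨y, hy⟩ := i₂.surjective (S₂.f x')
      have hgy : S₁.g y = 0 := by
        apply i₃.injective
        rw [comm₂₃, hy, map_zero]
        exact S₂.moduleCat_zero_apply x'
      obtain ⟨x, hx⟩ := hex₁ y hgy
      refine ⟨x, hf₂ ?_⟩
      rw [← comm₁₂, hx, hy]
  · intro i₁ i₂
    rw [ConcreteCategory.isIso_iff_bijective] at i₁ i₂ ⊢
    constructor
    · apply (injective_iff_map_eq_zero (φ.τ₃.hom : S₁.X₃ →ₗ[K] S₂.X₃)).mpr
      intro z hz
      obtain ⟨y, rfl⟩ := hg₁ z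
      rw [comm₂₃] at hz
      obtain ⟨x', hx'⟩ := hex₂ (φ.τ₂ y) hz
      obtain ⟨x, rfl⟩ := i₁.surjective x'
      rw [← comm₁₂] at hx'
      have : S₁.f x = y := i₂.injective hx'
      rw [← this]
      exact S₁.moduleCat_zero_apply x
    · intro z'
      obtain ⟨y', hy'⟩ := hg₂ z'
      obtain ⟨y, rfl⟩ := i₂.surjective y'
      exact ⟨S₁.g y, by rw [comm₂₃, hy']⟩
end Chase


lemma tame_two_of_three {K : Type} [Field K] {r : ℕ}
    (F G H : Qr r ⥤ ModuleCat K) (f : F ⟶ G) (g : G ⟶ H) (w : f ≫ g = 0)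
    (hse : (ShortComplex.mk f g w).ShortExact) :
        (IsTame F → IsTame G → IsTame H) ∧
        (IsTame F → IsTame H → IsTame G) ∧
        (IsTame G → IsTame H → IsTame F) := by
    set S : ShortComplex (Qr r ⥤ ModuleCat K) := ShortComplex.mk f g w with hSdef
    have exu : ∀ u : Qr r, (S.map ((evaluation (Qr r) (ModuleCat K)).obj u)).ShortExact :=
      fun u => hse.map_of_exact _
    have key : ∀ (u v : Qr r) (h : u ≤ v),
        (IsIso (G.map (homOfLE h)) → IsIso (H.map (homOfLE h)) → IsIso (F.map (homOfLE h))) ∧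
        (IsIso (F.map (homOfLE h)) → IsIso (G.map (homOfLE h)) → IsIso (H.map (homOfLE h))) :=
      fun u v h =>
        chase (S.mapNatTrans ((evaluation (Qr r) (ModuleCat K)).map (homOfLE h)))
          (exu u) (exu v)
    have mid : ∀ (u v : Qr r) (h : u ≤ v), IsIso (F.map (homOfLE h)) →
        IsIso (H.map (homOfLE h)) → IsIso (G.map (homOfLE h)) := by
      intro u v h h1 h3
      exact ShortComplex.isIso₂_of_shortExact_of_isIso₁₃'
        (S.mapNatTrans ((evaluation (Qr r) (ModuleCat K)).map (homOfLE h)))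
        (exu u) (exu v) h1 h3
    refine ⟨?_, ?_, ?_⟩
    · intro hF hG
      obtain ⟨γ, hγ, hF', hG'⟩ := exists_common_scale hF hG
      refine ⟨γ, hγ, fun v hv => ?_⟩
      exact (key _ _ hv).2 (hF' v hv) (hG' v hv)
    · intro hF hH
      obtain ⟨γ, hγ, hF', hH'⟩ := exists_common_scale hF hH
      refine ⟨γ, hγ, fun v hv => ?_⟩
      exact mid _ _ hv (hF' v hv) (hH' v hv)
    · intro hG hH
      obtain ⟨γ, hγ, hG', hH'⟩ := exists_common_scale hG hH
      refine ⟨γ, hγ, fun v hv => ?_⟩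
      exact (key _ _ hv).1 (hG' v hv) (hH' v hv)

/-- Tame functors form an abelian subcategory of `Fun(ℚ≥0^r, Vect_K)`: in any short exact
sequence `0 → F → G → H → 0`, if two of `F`, `G`, `H` are tame then so is the third, and
finite direct sums of tame functors are tame. -/
theorem tame_abelian_subcategory (K : Type) [Field K] (r : ℕ) :
    (∀ (F G H : Qr r ⥤ ModuleCat K) (f : F ⟶ G) (g : G ⟶ H) (w : f ≫ g = 0)
      (_ : (ShortComplex.mk f g w).ShortExact),
        (IsTame F → IsTame G → IsTame H) ∧
        (IsTame F → IsTame H → IsTame G) ∧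
        (IsTame G → IsTame H → IsTame F)) ∧
    (∀ (F G : Qr r ⥤ ModuleCat K), IsTame F → IsTame G → IsTame (F ⊞ G)) := by
  refine ⟨fun F G H f g w hse => tame_two_of_three F G H f g w hse, fun F G hF hG => ?_⟩
  exact (tame_two_of_three F (F ⊞ G) G biprod.inl biprod.snd (by simp)
    (ShortComplex.Splitting.ofHasBinaryBiproduct F G).shortExact).2.1 hF hG
end

section
/- A functor F: N^r → Vect_K is compact if and only if F is of finite rank, if and only if (1) F(v) is finite dimensional for every v and (2) there is a natural number n such that for every v = (v_1,…,v_r), the map F((min(n,v_1),…,min(n,v_r)) ≤ v) is an isomorphism. -/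
open CategoryTheory CategoryTheory.Limits

set_option synthInstance.maxHeartbeats 1000000
set_option maxHeartbeats 1000000

attribute [local instance 2000] Preorder.smallCategory

/-- A subfunctor of a functor `F : I ⥤ Vect_K`. -/
structure Subfunctor (K : Type) [Field K] {I : Type} [Category I] (F : I ⥤ ModuleCat K) where
  toFun : ∀ i, Submodule K (F.obj i)
  map_le : ∀ {i j : I} (h : i ⟶ j), Submodule.map (F.map h).hom (toFun i) ≤ toFun j

/-- `F` is compact: every increasing chain of subfunctors whose objectwise union is `F`
stabilizes. -/
def IsCompactFunctor (K : Type) [Field K] {I : Type} [Category I] (F : I ⥤ ModuleCat K) :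
    Prop :=
  ∀ S : ℕ → Subfunctor K F, (∀ n i, (S n).toFun i ≤ (S (n + 1)).toFun i) →
    (∀ i, ⨆ n, (S n).toFun i = ⊤) → ∃ k, ∀ i, (S k).toFun i = ⊤

/-- `F` is of finite rank: it admits a finite (minimal) set of generators, i.e. finitely many
elements `x k ∈ F(v k)` whose images under the structure maps span every value of `F`. -/
def IsFiniteRank (K : Type) [Field K] {I : Type} [Category I] (F : I ⥤ ModuleCat K) : Prop :=
  ∃ (n : ℕ) (v : Fin n → I) (x : ∀ k, F.obj (v k)),
    ∀ u : I, Submodule.span K {y | ∃ (k : Fin n) (h : v k ⟶ u), y = (F.map h).hom (x k)} = ⊤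

namespace Aux
variable {K : Type} [Field K] {r : ℕ} (F : Nr r ⥤ ModuleCat K)

lemma map_map {a b c : Nr r} (hab : a ≤ b) (hbc : b ≤ c) (x : F.obj a) :
    F.map (homOfLE hbc) (F.map (homOfLE hab) x) = F.map (homOfLE (hab.trans hbc)) x := by
  rw [← homOfLE_comp hab hbc, F.map_comp]; rfl

lemma map_self {a : Nr r} (h : a ≤ a) (x : F.obj a) : F.map (homOfLE h) x = x := by
  have : homOfLE h = 𝟙 a := Subsingleton.elim _ _
  rw [this, F.map_id]; rfl

lemma hom_eq {a b : Nr r} (h : a ⟶ b) : h = homOfLE (leOfHom h) := Subsingleton.elim _ _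

def cap (n : ℕ) (u : Nr r) : Nr r := fun i => min n (u i)

lemma cap_le_self (n : ℕ) (u : Nr r) : cap n u ≤ u := fun i => min_le_right _ _

lemma cap_le_cap_right {n : ℕ} {u u' : Nr r} (h : u ≤ u') : cap n u ≤ cap n u' :=
  fun i => min_le_min le_rfl (h i)

lemma cap_le_cap_left {n m : ℕ} (h : n ≤ m) (u : Nr r) : cap n u ≤ cap m u :=
  fun _ => min_le_min h le_rfl

lemma cap_eq_self {n : ℕ} {u : Nr r} (h : ∀ i, u i ≤ n) : cap n u = u := by
  funext i; exact min_eq_right (h i)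


/-- the subfunctor generated by values on the box `[0,n]^r`. -/
def rangeCap (n : ℕ) : Subfunctor K F where
  toFun u := LinearMap.range (F.map (homOfLE (cap_le_self n u))).hom
  map_le {u u'} h := by
    rintro y ⟨x, ⟨z, rfl⟩, rfl⟩
    rw [hom_eq h, map_map F _ _ z]
    refine ⟨F.map (homOfLE (cap_le_cap_right (leOfHom h))) z, ?_⟩
    rw [map_map]

lemma exists_surjLevel (hc : IsCompactFunctor K F) :
    ∃ k : ℕ, ∀ u : Nr r, Function.Surjective ⇑(F.map (homOfLE (cap_le_self k u))) := by
  obtain ⟨k, hk⟩ := hc (fun n => rangeCap F n)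
    (by
      intro n u
      rintro y ⟨z, rfl⟩
      exact ⟨F.map (homOfLE (cap_le_cap_left (Nat.le_succ n) u)) z, by rw [map_map]⟩)
    (by
      intro u
      rw [eq_top_iff]
      refine le_trans ?_ (le_iSup _ (Finset.univ.sup u))
      intro x _
      refine ⟨F.map (homOfLE ?_) x, ?_⟩
      · exact le_of_eq (cap_eq_self fun i => Finset.le_sup (Finset.mem_univ i)).symm
      · rw [map_map, map_self])
  refine ⟨k, fun u x => ?_⟩
  have : x ∈ (rangeCap F k).toFun u := by rw [hk u]; trivial
  exact this

/-- the subfunctor of everything generated strictly away from `w₀` -/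
def Rsub (w₀ u : Nr r) : Submodule K (F.obj u) :=
  ⨆ p : {w : Nr r // w ≤ u ∧ w ≠ w₀}, LinearMap.range (F.map (homOfLE p.2.1)).hom

lemma mem_Rsub (w₀ : Nr r) {w u : Nr r} (hwu : w ≤ u) (hw : w ≠ w₀) (x : F.obj w) :
    F.map (homOfLE hwu) x ∈ Rsub F w₀ u :=
  (le_iSup (fun p : {w : Nr r // w ≤ u ∧ w ≠ w₀} =>
    LinearMap.range (F.map (homOfLE p.2.1)).hom) ⟨w, hwu, hw⟩) ⟨x, rfl⟩

lemma Rsub_map_le (w₀ : Nr r) {u u' : Nr r} (h : u ≤ u') :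
    Submodule.map (F.map (homOfLE h)).hom (Rsub F w₀ u) ≤ Rsub F w₀ u' := by
  rw [Rsub, Submodule.map_iSup]
  refine iSup_le fun p => ?_
  rintro y ⟨x, ⟨z, rfl⟩, rfl⟩
  rw [map_map]
  exact mem_Rsub F w₀ _ p.2.2 z

/-- subfunctor generated by `Rsub` and a submodule at `w₀`. -/
def genSub (w₀ : Nr r) (C : Submodule K (F.obj w₀)) : Subfunctor K F where
  toFun u := Rsub F w₀ u ⊔ ⨆ h : w₀ ≤ u, Submodule.map (F.map (homOfLE h)).hom C
  map_le {u u'} h := by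
    rw [Submodule.map_sup]
    refine sup_le_sup (by rw [hom_eq h]; exact Rsub_map_le F w₀ (leOfHom h)) ?_
    rw [Submodule.map_iSup]
    refine iSup_le fun hw => ?_
    refine le_trans ?_ (le_iSup _ (hw.trans (leOfHom h)))
    rintro y ⟨x, ⟨c, hc, rfl⟩, rfl⟩
    refine ⟨c, hc, ?_⟩
    rw [hom_eq h, map_map]

lemma findim_of_compact (hc : IsCompactFunctor K F) (v : Nr r) :
    FiniteDimensional K (F.obj v) := by
  classical
  obtain ⟨k, hk⟩ := exists_surjLevel F hc
  suffices H : ∀ (N : ℕ) (v : Nr r), (∑ i, v i) = N → FiniteDimensional K (F.obj v) from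
    H _ v rfl
  intro N
  induction N using Nat.strong_induction_on with
  | _ N IH =>
  intro w₀ hN
  haveI : Finite {w : Nr r // w ≤ w₀ ∧ w ≠ w₀} := by
    refine Finite.of_injective
      (fun p => (fun i => (⟨p.1 i, Nat.lt_succ_of_le (p.2.1 i)⟩ : Fin (w₀ i + 1)))) ?_
    intro p q hpq
    apply Subtype.ext; funext i
    exact congrArg Fin.val (congrFun hpq i)
  haveI hIH : ∀ p : {w : Nr r // w ≤ w₀ ∧ w ≠ w₀}, FiniteDimensional K (F.obj p.1) := by
    rintro ⟨w, hw, hne⟩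
    refine IH (∑ i, w i) ?_ w rfl
    subst hN
    refine Finset.sum_lt_sum (fun i _ => hw i) ?_
    obtain ⟨i, hi⟩ := Function.ne_iff.mp hne
    exact ⟨i, Finset.mem_univ i, lt_of_le_of_ne (hw i) hi⟩
  haveI hR : FiniteDimensional K (Rsub F w₀ w₀) := by
    unfold Rsub
    infer_instance
  have hQ : FiniteDimensional K (F.obj w₀ ⧸ Rsub F w₀ w₀) := by
    by_contra hq
    set R := Rsub F w₀ w₀ with hRdef
    haveI : Infinite (Module.Basis.ofVectorSpaceIndex K (F.obj w₀ ⧸ R)) := by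
      rw [← not_finite_iff_infinite]
      intro hfin
      exact hq (Module.Finite.of_basis (Module.Basis.ofVectorSpace K _))
    set B := Module.Basis.ofVectorSpace K (F.obj w₀ ⧸ R) with hB
    set e := Infinite.natEmbedding (Module.Basis.ofVectorSpaceIndex K (F.obj w₀ ⧸ R)) with he
    set s : ℕ → Set (Module.Basis.ofVectorSpaceIndex K (F.obj w₀ ⧸ R)) :=
      fun m => {i | ∀ j, m ≤ j → i ≠ e j} with hs
    have hsmono : ∀ m, s m ⊆ s (m + 1) := by
      intro m i hi j hj
      exact hi j (le_trans (Nat.le_succ m) hj)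
    set P : ℕ → Submodule K (F.obj w₀ ⧸ R) := fun m => Submodule.span K (B '' s m) with hP
    have hPmono : Monotone P := by
      apply monotone_nat_of_le_succ
      intro m
      exact Submodule.span_mono (Set.image_mono (hsmono m))
    have hPne : ∀ m, B (e m) ∉ P m := by
      intro m
      exact B.linearIndependent.notMem_span_image (by
        intro hmem
        exact hmem m le_rfl rfl)
    have hPtop : ⨆ m, P m = ⊤ := by
      rw [eq_top_iff, ← B.span_eq]
      refine Submodule.span_le.mpr ?_
      rintro _ ⟨i, rfl⟩
      by_cases hi : ∃ j, i = e j
      · obtain ⟨j, rfl⟩ := hi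
        refine Submodule.mem_iSup_of_mem (j + 1) (Submodule.subset_span ⟨e j, ?_, rfl⟩)
        intro j' hj' heq
        have := e.injective heq
        omega
      · refine Submodule.mem_iSup_of_mem 0 (Submodule.subset_span ⟨i, ?_, rfl⟩)
        intro j _ heq
        exact hi ⟨j, heq⟩
    set C : ℕ → Submodule K (F.obj w₀) := fun m => Submodule.comap R.mkQ (P m) with hC
    have hCmono : ∀ m, C m ≤ C (m + 1) := fun m => Submodule.comap_mono (hPmono (Nat.le_succ m))
    obtain ⟨m, hm⟩ := hc (fun m => genSub F w₀ (C m))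
      (by
        intro m u
        exact sup_le_sup le_rfl (iSup_mono fun h => Submodule.map_mono (hCmono m)))
      (by
        intro u
        rw [eq_top_iff]
        intro x _
        obtain ⟨y, rfl⟩ := hk u x
        rcases eq_or_ne (cap k u) w₀ with hcap | hcap
        · subst hcap
          have hy : y ∈ ⨆ m, C m := by
            have : R.mkQ y ∈ ⨆ m, P m := by rw [hPtop]; trivial
            obtain ⟨m, hmem⟩ :=
              (Submodule.mem_iSup_of_directed _ (hPmono.directed_le)).mp this
            exact Submodule.mem_iSup_of_mem m hmem
          obtain ⟨m, hmem⟩ := (Submodule.mem_iSup_of_directed _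
            ((monotone_nat_of_le_succ hCmono).directed_le)).mp hy
          refine Submodule.mem_iSup_of_mem m (Submodule.mem_sup_right ?_)
          exact Submodule.mem_iSup_of_mem (cap_le_self k u) ⟨y, hmem, rfl⟩
        · exact Submodule.mem_iSup_of_mem 0
            (Submodule.mem_sup_left (mem_Rsub F w₀ (cap_le_self k u) hcap y)))
    have hCtop : C m = ⊤ := by
      rw [eq_top_iff, ← hm w₀]
      refine sup_le ?_ (iSup_le fun h => ?_)
      · intro x hx
        show R.mkQ x ∈ P m
        have : R.mkQ x = 0 := by
          rw [Submodule.mkQ_apply, Submodule.Quotient.mk_eq_zero]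
          exact hx
        rw [this]
        exact (P m).zero_mem
      · rintro y ⟨c, hcm, rfl⟩
        rw [map_self]
        exact hcm
    refine hPne m ?_
    obtain ⟨x, hx⟩ := R.mkQ_surjective (B (e m))
    rw [← hx]
    have : x ∈ C m := by rw [hCtop]; trivial
    exact this
  have h1 : Module.rank K (F.obj w₀ ⧸ Rsub F w₀ w₀) < Cardinal.aleph0 :=
    Module.rank_lt_aleph0_iff.mpr hQ
  have h2 : Module.rank K (Rsub F w₀ w₀) < Cardinal.aleph0 :=
    Module.rank_lt_aleph0_iff.mpr hR
  have hrank := Submodule.rank_quotient_add_rank (Rsub F w₀ w₀)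
  have hlt := Cardinal.add_lt_aleph0 h1 h2
  rw [hrank] at hlt
  exact Module.rank_lt_aleph0_iff.mp hlt

lemma isFiniteRank_of_finite {ι : Type} [Finite ι] (v : ι → Nr r) (x : ∀ j, F.obj (v j))
    (hspan : ∀ u, Submodule.span K {y | ∃ (j : ι) (h : v j ⟶ u), y = F.map h (x j)} = ⊤) :
    IsFiniteRank K F := by
  classical
  haveI : Fintype ι := Fintype.ofFinite ι
  let e : Fin (Fintype.card ι) ≃ ι := (Fintype.equivFin ι).symm
  refine ⟨Fintype.card ι, v ∘ e, fun kk => x (e kk), fun u => ?_⟩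
  rw [← hspan u]
  congr 1
  ext y
  constructor
  · rintro ⟨kk, h, rfl⟩
    exact ⟨e kk, h, rfl⟩
  · rintro ⟨j, h, rfl⟩
    obtain ⟨kk, rfl⟩ := e.surjective j
    exact ⟨kk, h, rfl⟩

lemma finiteRank_of_surj (hfd : ∀ u : Nr r, FiniteDimensional K (F.obj u)) (k : ℕ)
    (hk : ∀ u : Nr r, Function.Surjective ⇑(F.map (homOfLE (cap_le_self k u)))) :
    IsFiniteRank K F := by
  classical
  set Box := {w : Nr r // ∀ i, w i ≤ k} with hBox
  haveI : Finite Box := by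
    refine Finite.of_injective
      (fun p => (fun i => (⟨p.1 i, Nat.lt_succ_of_le (p.2 i)⟩ : Fin (k + 1)))) ?_
    intro p q hpq
    apply Subtype.ext; funext i
    exact congrArg Fin.val (congrFun hpq i)
  have hex : ∀ w : Box, ∃ (n : ℕ) (b : Fin n → F.obj w.1),
      Submodule.span K (Set.range b) = ⊤ := by
    intro w
    obtain ⟨n, b, hb⟩ := Module.Finite.exists_fin (R := K) (M := F.obj w.1)
    exact ⟨n, b, hb⟩
  choose nb b hb using hex
  haveI : Finite (Σ w : Box, Fin (nb w)) := by infer_instance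
  refine isFiniteRank_of_finite F (fun j : Σ w : Box, Fin (nb w) => j.1.1)
    (fun j => b j.1 j.2) (fun u => ?_)
  rw [eq_top_iff]
  intro z _
  obtain ⟨y, rfl⟩ := hk u z
  set wbox : Box := ⟨cap k u, fun i => min_le_left _ _⟩ with hwbox
  have hy : y ∈ Submodule.span K (Set.range (b wbox)) := by rw [hb wbox]; trivial
  have hmem := Submodule.mem_map_of_mem (f := (F.map (homOfLE (cap_le_self k u))).hom) hy
  rw [Submodule.map_span] at hmem
  refine Submodule.span_mono ?_ hmem
  rintro _ ⟨_, ⟨t, rfl⟩, rfl⟩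
  exact ⟨⟨wbox, t⟩, homOfLE (cap_le_self k u), rfl⟩

lemma compact_of_finiteRank (h : IsFiniteRank K F) : IsCompactFunctor K F := by
  classical
  obtain ⟨n, v, x, hspan⟩ := h
  intro S hmono htop
  have hSm : ∀ i : Nr r, Monotone fun m => (S m).toFun i := fun i =>
    monotone_nat_of_le_succ (fun m => hmono m i)
  have hx : ∀ kk : Fin n, ∃ m, x kk ∈ (S m).toFun (v kk) := by
    intro kk
    have : x kk ∈ ⨆ m, (S m).toFun (v kk) := by rw [htop (v kk)]; trivial
    exact (Submodule.mem_iSup_of_directed _ ((hSm (v kk)).directed_le)).mp this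
  choose m hm using hx
  refine ⟨Finset.univ.sup m, fun u => ?_⟩
  rw [eq_top_iff, ← hspan u]
  refine Submodule.span_le.mpr ?_
  rintro _ ⟨kk, h, rfl⟩
  have h1 : x kk ∈ (S (Finset.univ.sup m)).toFun (v kk) :=
    hSm (v kk) (Finset.le_sup (Finset.mem_univ kk)) (hm kk)
  exact (S (Finset.univ.sup m)).map_le h ⟨x kk, h1, rfl⟩


section Comb
variable {r : ℕ}
def succAt (u : Nr r) (i : Fin r) : Nr r := Function.update u i (u i + 1)

lemma succAt_self (u : Nr r) (i : Fin r) : succAt u i i = u i + 1 := by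
  simp [succAt]

lemma succAt_ne (u : Nr r) {i c : Fin r} (h : c ≠ i) : succAt u i c = u c := by
  simp [succAt, Function.update_of_ne h]

lemma le_succAt (u : Nr r) (i : Fin r) : u ≤ succAt u i := by
  intro c
  rcases eq_or_ne c i with rfl | h
  · rw [succAt_self]
    exact Nat.le_succ _
  · rw [succAt_ne u h]

def GoodLE (k : ℕ) (v u : Nr r) : Prop := v ≤ u ∧ ∀ c, v c < k → u c = v c

lemma pathLe (k : ℕ) (d : Nr r → ℕ)
    (hstep : ∀ u i, k ≤ u i → d (succAt u i) ≤ d u) :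
    ∀ v u, GoodLE k v u → d u ≤ d v := by
  suffices H : ∀ (N : ℕ) (v u : Nr r), GoodLE k v u → (∑ c, (u c - v c)) = N → d u ≤ d v from
    fun v u h => H _ v u h rfl
  intro N
  induction N using Nat.strong_induction_on with
  | _ N IH =>
  intro v u hg hN
  rcases eq_or_ne v u with rfl | hne
  · exact le_rfl
  · obtain ⟨c, hc⟩ := Function.ne_iff.mp hne
    have hlt : v c < u c := lt_of_le_of_ne (hg.1 c) hc
    have hkc : k ≤ v c := by
      by_contra hcon
      exact Nat.ne_of_gt hlt (hg.2 c (not_le.mp hcon))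
    have hg' : GoodLE k (succAt v c) u := by
      constructor
      · intro c'
        rcases eq_or_ne c' c with rfl | h
        · rw [succAt_self]
          exact hlt
        · rw [succAt_ne v h]; exact hg.1 c'
      · intro c' hc'
        rcases eq_or_ne c' c with rfl | h
        · rw [succAt_self] at hc'
          exact absurd (Nat.lt_of_succ_lt hc') (Nat.not_lt.mpr hkc)
        · rw [succAt_ne v h] at hc' ⊢; exact hg.2 c' hc'
    have hsum : (∑ c', (u c' - succAt v c c')) < N := by
      rw [← hN]
      refine Finset.sum_lt_sum (fun c' _ => ?_) ⟨c, Finset.mem_univ c, ?_⟩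
      · rcases eq_or_ne c' c with rfl | h
        · rw [succAt_self]
          exact Nat.sub_le_sub_left (Nat.le_succ _) _
        · rw [succAt_ne v h]
      · rw [succAt_self]
        have h1 : v c < u c := hlt
        omega
    exact le_trans (IH _ hsum (succAt v c) u hg' rfl) (hstep v c hkc)

lemma exists_stab (k : ℕ) (d : Nr r → ℕ)
    (hstep : ∀ u i, k ≤ u i → d (succAt u i) ≤ d u) :
    ∃ n, k ≤ n ∧ ∀ u i, n ≤ u i → d u ≤ d (succAt u i) := by
  classical
  by_contra hcon
  push_neg at hcon
  have H : ∀ n : ℕ, ∃ (u : Nr r) (i : Fin r), k ≤ u i ∧ n ≤ u i ∧ d (succAt u i) < d u := by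
    intro n
    obtain ⟨u, i, hni, hdrop⟩ := hcon (max k n) (le_max_left _ _)
    exact ⟨u, i, le_trans (le_max_left k n) hni, le_trans (le_max_right k n) hni, hdrop⟩
  choose U I hkI hnI hdrop using H
  obtain ⟨i, hfib⟩ := Finite.exists_infinite_fiber I
  haveI : Infinite ↥(I ⁻¹' {i}) := hfib
  set emb := Nat.orderEmbeddingOfSet (I ⁻¹' {i}) with hembdef
  have hIe : ∀ m, I (emb m) = i := by
    intro m
    have : emb m ∈ I ⁻¹' {i} := by
      rw [hembdef, Nat.orderEmbeddingOfSet_apply]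
      exact (Nat.Subtype.ofNat (I ⁻¹' {i}) m).2
    exact this
  set W0 : ℕ → Nr r := fun m => U (emb m) with hW0
  obtain ⟨g, hg⟩ := (Set.isPWO_univ_iff.mpr inferInstance :
      (Set.univ : Set (Nr r)).IsPWO).exists_monotone_subseq (f := W0) (fun _ => Set.mem_univ _)
  set W : ℕ → Nr r := fun j => W0 (g j) with hW
  have hWmono : ∀ {a b : ℕ}, a ≤ b → W a ≤ W b := fun hab => hg hab
  have hWi : ∀ j, j ≤ W j i := by
    intro j
    have h1 := hnI (emb (g j))
    rw [hIe (g j)] at h1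
    calc j ≤ g j := g.strictMono.le_apply
      _ ≤ emb (g j) := emb.strictMono.le_apply
      _ ≤ W j i := h1
  have hWk : ∀ j, k ≤ W j i := by
    intro j
    have h1 := hkI (emb (g j))
    rwa [hIe (g j)] at h1
  have hWdrop : ∀ j, d (succAt (W j) i) < d (W j) := by
    intro j
    have h1 := hdrop (emb (g j))
    rwa [hIe (g j)] at h1
  have hfreeze : ∀ c : Fin r, ∃ J : ℕ, ∀ j j', J ≤ j → j ≤ j' → W j c < k → W j' c = W j c := by
    intro c
    by_cases hb : ∃ j₀, k ≤ W j₀ c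
    · obtain ⟨j₀, h0⟩ := hb
      exact ⟨j₀, fun j j' hJ _ hlt =>
        absurd (le_trans h0 (hWmono hJ c)) (not_le.mpr hlt)⟩
    · push_neg at hb
      have hbdd : BddAbove (Set.range fun j => W j c) := by
        refine ⟨k, ?_⟩
        rintro _ ⟨j, rfl⟩
        exact le_of_lt (hb j)
      have hmem := Nat.sSup_mem (s := Set.range fun j => W j c) ⟨W 0 c, ⟨0, rfl⟩⟩ hbdd
      obtain ⟨j₀, hj₀⟩ := hmem
      refine ⟨j₀, fun j j' hJ hjj' _ => ?_⟩
      have hle : ∀ j'', W j'' c ≤ W j₀ c := fun j'' =>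
        le_trans (le_csSup hbdd ⟨j'', rfl⟩) (le_of_eq hj₀.symm)
      have e1 : W j c = W j₀ c := le_antisymm (hle j) (hWmono hJ c)
      have e2 : W j' c = W j₀ c := le_antisymm (hle j') (hWmono (hJ.trans hjj') c)
      rw [e1, e2]
  choose Jf hJf using hfreeze
  set J := Finset.univ.sup Jf with hJ
  set ψ : ℕ → ℕ := fun m => Nat.rec J (fun _ p => max (max J p) (W p i + 1)) m with hψ
  have hψ0 : ψ 0 = J := rfl
  have hψs : ∀ m, ψ (m + 1) = max (max J (ψ m)) (W (ψ m) i + 1) := fun m => rfl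
  have hψJ : ∀ m, J ≤ ψ m := by
    intro m
    cases m with
    | zero => exact le_rfl
    | succ m => rw [hψs]; omega
  have hψmono : ∀ m, ψ m ≤ ψ (m + 1) := by
    intro m; rw [hψs]; omega
  have hψstrict : ∀ m, W (ψ m) i < W (ψ (m + 1)) i := by
    intro m
    have h1 : W (ψ m) i + 1 ≤ ψ (m + 1) := by rw [hψs]; omega
    exact lt_of_lt_of_le (Nat.lt_succ_self _) (le_trans h1 (hWi (ψ (m + 1))))
  have hgood : ∀ m, GoodLE k (succAt (W (ψ m)) i) (W (ψ (m + 1))) := by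
    intro m
    constructor
    · intro c
      rcases eq_or_ne c i with rfl | h
      · rw [succAt_self]
        exact hψstrict m
      · rw [succAt_ne _ h]
        exact hWmono (hψmono m) c
    · intro c hc
      rcases eq_or_ne c i with rfl | h
      · rw [succAt_self] at hc
        exact absurd (Nat.lt_of_succ_lt hc) (Nat.not_lt.mpr (hWk (ψ m)))
      · rw [succAt_ne _ h] at hc ⊢
        exact hJf c (ψ m) (ψ (m + 1)) (le_trans (Finset.le_sup (Finset.mem_univ c)) (hψJ m))
          (hψmono m) hc
  have hkey : ∀ m, d (W (ψ (m + 1))) < d (W (ψ m)) := by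
    intro m
    exact lt_of_le_of_lt (pathLe k d hstep _ _ (hgood m)) (hWdrop (ψ m))
  have hfin : ∀ m, d (W (ψ m)) + m ≤ d (W (ψ 0)) := by
    intro m
    induction m with
    | zero => omega
    | succ m ih =>
      have := hkey m
      omega
  have := hfin (d (W (ψ 0)) + 1)
  omega


end Comb
/-- surjectivity transfer: any map above the `k`-cap is surjective -/
lemma surj_of_cap_le (k : ℕ)
    (hk : ∀ u : Nr r, Function.Surjective ⇑(F.map (homOfLE (cap_le_self k u))))
    {a b : Nr r} (hab : a ≤ b) (hcap : cap k b ≤ a) :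
    Function.Surjective ⇑(F.map (homOfLE hab)) := by
  intro y
  obtain ⟨x, hx⟩ := hk b y
  refine ⟨F.map (homOfLE hcap) x, ?_⟩
  rw [map_map]
  exact hx

lemma exists_iso_level (hfd : ∀ u : Nr r, FiniteDimensional K (F.obj u)) (k : ℕ)
    (hk : ∀ u : Nr r, Function.Surjective ⇑(F.map (homOfLE (cap_le_self k u)))) :
    ∃ n : ℕ, ∀ u : Nr r, IsIso (F.map (homOfLE (cap_le_self n u))) := by
  classical
  set d : Nr r → ℕ := fun u => Module.finrank K (F.obj u) with hd
  have hstep : ∀ (u : Nr r) (i : Fin r), k ≤ u i → d (succAt u i) ≤ d u := by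
    intro u i hki
    have hcap : cap k (succAt u i) ≤ u := by
      intro c
      rcases eq_or_ne c i with rfl | h
      · exact le_trans (min_le_left _ _) hki
      · rw [show cap k (succAt u i) c = min k (u c) by rw [cap]; rw [succAt_ne u h]]
        exact min_le_right _ _
    have hsurj := surj_of_cap_le F k hk (le_succAt u i) hcap
    haveI := hfd u
    have h1 := LinearMap.finrank_range_le (F.map (homOfLE (le_succAt u i))).hom
    rwa [LinearMap.range_eq_top.mpr hsurj, finrank_top] at h1
  obtain ⟨n, hkn, hstab⟩ := exists_stab k d hstep
  have hsurjn : ∀ u : Nr r, Function.Surjective ⇑(F.map (homOfLE (cap_le_self n u))) := by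
    intro u
    refine surj_of_cap_le F k hk (cap_le_self n u) (fun c => ?_)
    exact min_le_min hkn le_rfl
  have hdim : ∀ u : Nr r, d (cap n u) = d u := by
    suffices H : ∀ (M : ℕ) (u : Nr r), (∑ c, (u c - min n (u c))) = M → d (cap n u) = d u from
      fun u => H _ u rfl
    intro M
    induction M using Nat.strong_induction_on with
    | _ M IH =>
    intro u hM
    by_cases hbig : ∀ c, u c ≤ n
    · rw [show cap n u = u from funext fun c => min_eq_right (hbig c)]
    · push_neg at hbig
      obtain ⟨i, hi⟩ := hbig  -- n < u i
      set u'' : Nr r := Function.update u i (u i - 1) with hu''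
      have hui : u'' i = u i - 1 := by simp [hu'']
      have huc : ∀ c, c ≠ i → u'' c = u c := fun c h => by
        simp [hu'', Function.update_of_ne h]
      have hsucc : succAt u'' i = u := by
        funext c
        rcases eq_or_ne c i with rfl | h
        · rw [succAt_self, hui]; omega
        · rw [succAt_ne _ h, huc c h]
      have hcapeq : cap n u'' = cap n u := by
        funext c
        rcases eq_or_ne c i with rfl | h
        · show min n (u'' c) = min n (u c)
          rw [hui]
          have : n ≤ u c - 1 := by omega
          rw [min_eq_left this, min_eq_left (by omega)]
        · show min n (u'' c) = min n (u c)
          rw [huc c h]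
      have hmeas : (∑ c, (u'' c - min n (u'' c))) < M := by
        rw [← hM]
        refine Finset.sum_lt_sum (fun c _ => ?_) ⟨i, Finset.mem_univ i, ?_⟩
        · rcases eq_or_ne c i with rfl | h
          · rw [hui]
            have h1 : n ≤ u c - 1 := by omega
            rw [min_eq_left h1, min_eq_left (by omega)]
            omega
          · rw [huc c h]
        · rw [hui]
          have h1 : n ≤ u i - 1 := by omega
          rw [min_eq_left h1, min_eq_left (by omega)]
          omega
      have h1 : d (cap n u'') = d u'' := IH _ hmeas u'' rfl
      have h2 : d u'' = d u := by
        have hle : d u'' ≤ d (succAt u'' i) := hstab u'' i (by rw [hui]; omega)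
        have hge : d (succAt u'' i) ≤ d u'' := hstep u'' i (by rw [hui]; omega)
        rw [← hsucc]
        omega
      rw [← hcapeq, h1, h2]
  refine ⟨n, fun u => ?_⟩
  have hbij : Function.Bijective ⇑(F.map (homOfLE (cap_le_self n u))) := by
    haveI := hfd (cap n u)
    haveI := hfd u
    refine ⟨?_, hsurjn u⟩
    exact (LinearMap.injective_iff_surjective_of_finrank_eq_finrank (hdim u)).mpr (hsurjn u)
  exact (ConcreteCategory.isIso_iff_bijective _).mpr hbij

end Aux

/-- A functor `F : ℕ^r ⥤ Vect_K` is compact iff it is of finite rank, iff (1) all its values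
are finite dimensional and (2) there is `n` such that for every `v` the map
`F((min(n,v₁),…,min(n,v_r)) ≤ v)` is an isomorphism. -/
theorem isCompact_iff_finiteRank_iff (K : Type) [Field K] (r : ℕ) (F : Nr r ⥤ ModuleCat K) :
    (IsCompactFunctor K F ↔ IsFiniteRank K F) ∧
    (IsCompactFunctor K F ↔
      ((∀ v : Nr r, FiniteDimensional K (F.obj v)) ∧
        ∃ n : ℕ, ∀ v : Nr r,
          IsIso (F.map (homOfLE (show (fun i => min n (v i)) ≤ v from
            fun i => min_le_right _ _))))) := by
  constructor
  · constructor
    · intro hc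
      obtain ⟨k, hk⟩ := Aux.exists_surjLevel F hc
      exact Aux.finiteRank_of_surj F (Aux.findim_of_compact F hc) k hk
    · exact Aux.compact_of_finiteRank F
  · constructor
    · intro hc
      obtain ⟨k, hk⟩ := Aux.exists_surjLevel F hc
      have hfd := Aux.findim_of_compact F hc
      obtain ⟨n, hn⟩ := Aux.exists_iso_level F hfd k hk
      exact ⟨hfd, n, fun v => hn v⟩
    · rintro ⟨hfd, n, hiso⟩
      apply Aux.compact_of_finiteRank
      refine Aux.finiteRank_of_surj F hfd n (fun u => ?_)
      have h1 : IsIso (F.map (homOfLE (Aux.cap_le_self n u))) := hiso u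
      intro y
      refine ⟨CategoryTheory.inv (F.map (homOfLE (Aux.cap_le_self n u))) y, ?_⟩
      have h2 := CategoryTheory.IsIso.inv_hom_id (F.map (homOfLE (Aux.cap_le_self n u)))
      calc (F.map (homOfLE (Aux.cap_le_self n u)))
            (CategoryTheory.inv (F.map (homOfLE (Aux.cap_le_self n u))) y)
          = (CategoryTheory.inv (F.map (homOfLE (Aux.cap_le_self n u))) ≫
              F.map (homOfLE (Aux.cap_le_self n u))) y := rfl
        _ = y := by rw [h2]; rfl
end

section
/- Every projective object in Fun(N^r, Vect_K) is free, i.e., isomorphic to a direct sum ⊕_{v∈N^r} K(v,−)⊗V_v. -/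
open CategoryTheory CategoryTheory.Limits

set_option synthInstance.maxHeartbeats 1000000
set_option maxHeartbeats 1000000

attribute [local instance 2000] Preorder.smallCategory

/-- The free functor on one generator `K(v,-) : ℕ^r ⥤ Vect_K`. -/
noncomputable def freeN (K : Type) [Field K] {r : ℕ} (v : Nr r) : Nr r ⥤ ModuleCat K :=
  coyoneda.obj (Opposite.op v) ⋙ ModuleCat.free K

/-- A functor `ℕ^r ⥤ Vect_K` is free if it is isomorphic to a direct sum
`⊕_{v} K(v,-) ⊗ V_v`, i.e. to a coproduct of functors `K(vᵢ,-)`. -/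
def IsFreeFunctor (K : Type) [Field K] {r : ℕ} (F : Nr r ⥤ ModuleCat K) : Prop :=
  ∃ (ι : Type) (v : ι → Nr r), Nonempty (F ≅ ∐ fun i => freeN K (v i))

namespace ProjFree

variable {K : Type} [Field K] {r : ℕ}

noncomputable def elemHom (G : Nr r ⥤ ModuleCat K) (u : Nr r) (x : G.obj u) :
    freeN K u ⟶ G where
  app w := ModuleCat.freeDesc (TypeCat.ofHom (fun f : u ⟶ w => G.map f x))
  naturality w w' g := by
    apply ModuleCat.free_hom_ext
    intro f
    simp [freeN, ModuleCat.free_map_apply]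

@[simp] lemma elemHom_app_mk (G : Nr r ⥤ ModuleCat K) (u : Nr r) (x : G.obj u)
    (w : Nr r) (f : u ⟶ w) :
    (elemHom G u x).app w (ModuleCat.freeMk f) = G.map f x := by
  exact ModuleCat.freeDesc_apply _ f

lemma comp_apply' {A B C : ModuleCat K} (f : A ⟶ B) (g : B ⟶ C) (x : A) :
    (f ≫ g) x = g (f x) := rfl

variable (G : Nr r ⥤ ModuleCat K)

/-- The radical of `G` at `w`: the sum of the images of all maps from strictly below. -/
noncomputable def radSub (w : Nr r) : Submodule K (G.obj w) :=
  ⨆ p : {u : Nr r // u < w}, LinearMap.range (G.map (homOfLE p.2.le)).hom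

/-- The "top" of `G` at `w`. -/
noncomputable abbrev topM (w : Nr r) := G.obj w ⧸ radSub G w

/-- A lift of an element of the top back to `G(w)`. -/
noncomputable def liftT (w : Nr r) (t : topM G w) : G.obj w :=
  (Submodule.Quotient.mk_surjective (radSub G w) t).choose

@[simp] lemma liftT_spec (w : Nr r) (t : topM G w) :
    Submodule.Quotient.mk (liftT G w t) = t :=
  (Submodule.Quotient.mk_surjective (radSub G w) t).choose_spec

/-- The index type: for each `w`, a basis of the top of `G` at `w`. -/
def Idx : Type := Σ w : Nr r, Module.Basis.ofVectorSpaceIndex K (topM G w)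

/-- The free functor built from bases of the tops. -/
noncomputable def FreeF : Nr r ⥤ ModuleCat K := ∐ fun i : Idx G => freeN K i.1

/-- The canonical map from the free cover to `G`. -/
noncomputable def Phi : FreeF G ⟶ G :=
  Sigma.desc fun i : Idx G => elemHom G i.1 (liftT G i.1 (i.2 : topM G i.1))

lemma iota_Phi (i : Idx G) :
    Sigma.ι (fun i : Idx G => freeN K i.1) i ≫ Phi G
      = elemHom G i.1 (liftT G i.1 (i.2 : topM G i.1)) := by
  simp [Phi]

lemma Phi_app_iota (i : Idx G) (w : Nr r) (p : (freeN K i.1).obj w) :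
    (Phi G).app w ((Sigma.ι (fun i : Idx G => freeN K i.1) i).app w p)
      = (elemHom G i.1 (liftT G i.1 (i.2 : topM G i.1))).app w p := by
  have h := NatTrans.congr_app (iota_Phi G i) w
  exact ConcreteCategory.congr_hom h p

lemma iSup_range_iota (w : Nr r) :
    (⨆ i : Idx G, LinearMap.range
      (show (freeN K i.1).obj w →ₗ[K] (FreeF G).obj w from
        ((Sigma.ι (fun i : Idx G => freeN K i.1) i).app w).hom)) = ⊤ := by
  set S := (⨆ i : Idx G, LinearMap.range
      (show (freeN K i.1).obj w →ₗ[K] (FreeF G).obj w from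
        ((Sigma.ι (fun i : Idx G => freeN K i.1) i).app w).hom)) with hS
  let q : (FreeF G).obj w ⟶ ModuleCat.of K ((FreeF G).obj w ⧸ S) := ModuleCat.ofHom S.mkQ
  have hc := isColimitOfPreserves ((evaluation (Nr r) (ModuleCat K)).obj w)
      (colimit.isColimit (Discrete.functor (fun i : Idx G => freeN K i.1)))
  have hq : q = 0 := by
    apply hc.hom_ext
    rintro ⟨i⟩
    refine ModuleCat.hom_ext (LinearMap.ext fun p => ?_)
    exact (Submodule.Quotient.mk_eq_zero S).2
      (Submodule.mem_iSup_of_mem i ⟨p, rfl⟩)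
  rw [eq_top_iff]
  intro x _
  have hx : q x = 0 := by rw [hq]; rfl
  exact (Submodule.Quotient.mk_eq_zero S).1 hx

lemma freeN_map_mk (u w w' : Nr r) (g : w ⟶ w') (f : u ⟶ w) :
    (freeN K u).map g (ModuleCat.freeMk f) = ModuleCat.freeMk (f ≫ g) :=
  ModuleCat.free_map_apply _ _

/-- The generator of `FreeF G` at `w` indexed by a basis element of the top at `w`. -/
noncomputable def genAt (w : Nr r) (b : Module.Basis.ofVectorSpaceIndex K (topM G w)) :
    (FreeF G).obj w :=
  (Sigma.ι (fun i : Idx G => freeN K i.1) (⟨w, b⟩ : Idx G)).app w (ModuleCat.freeMk (𝟙 w))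

noncomputable def Theta (w : Nr r) :
    (Module.Basis.ofVectorSpaceIndex K (topM G w) →₀ K) →ₗ[K] (FreeF G).obj w :=
  Finsupp.lift _ K _ (fun b => genAt G w b)

@[simp] lemma Theta_single (w : Nr r) (b : Module.Basis.ofVectorSpaceIndex K (topM G w)) :
    Theta G w (Finsupp.single b 1) = genAt G w b := by
  simp [Theta]

noncomputable def radF (w : Nr r) : Submodule K ((FreeF G).obj w) :=
  ⨆ p : {u : Nr r // u < w}, LinearMap.range
    (show (FreeF G).obj p.1 →ₗ[K] (FreeF G).obj w from ((FreeF G).map (homOfLE p.2.le)).hom)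

lemma iota_app_mk (i : Idx G) (w : Nr r) (f : i.1 ⟶ w) :
    (Sigma.ι (fun i : Idx G => freeN K i.1) i).app w (ModuleCat.freeMk f)
      = (FreeF G).map f
        ((Sigma.ι (fun i : Idx G => freeN K i.1) i).app i.1 (ModuleCat.freeMk (𝟙 i.1))) := by
  have hnat := ConcreteCategory.congr_hom
    ((Sigma.ι (fun i : Idx G => freeN K i.1) i).naturality f)
    (ModuleCat.freeMk (𝟙 i.1) : (freeN K i.1).obj i.1)
  rw [show (ModuleCat.freeMk f : (freeN K i.1).obj w)
      = (freeN K i.1).map f (ModuleCat.freeMk (𝟙 i.1)) by rw [freeN_map_mk, Category.id_comp]]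
  exact hnat

lemma mem_theta_sup_radF (w : Nr r) (x : (FreeF G).obj w) :
    x ∈ LinearMap.range (Theta G w) ⊔ radF G w := by
  have htop := iSup_range_iota G w
  have hx : x ∈ (⊤ : Submodule K ((FreeF G).obj w)) := trivial
  rw [← htop] at hx
  refine Submodule.iSup_induction
    (motive := fun y => y ∈ LinearMap.range (Theta G w) ⊔ radF G w) _ hx ?_ ?_ ?_
  · rintro i y hy
    obtain ⟨p, rfl⟩ := hy
    dsimp only
    induction p using Finsupp.induction_linear with
    | zero => erw [map_zero]; exact Submodule.zero_mem _
    | add f g hf hg => erw [map_add]; exact Submodule.add_mem _ hf hg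
    | single f c =>
      obtain ⟨u, b⟩ := i
      have hfc : (Finsupp.single f c : (freeN K u).obj w)
          = c • (ModuleCat.freeMk f : (freeN K u).obj w) := by
        exact (Finsupp.smul_single_one _ _).symm
      rw [hfc]; erw [map_smul]
      refine Submodule.smul_mem _ _ ?_
      by_cases hu : u = w
      · subst hu
        exact Submodule.mem_sup_left ⟨Finsupp.single b 1, Theta_single G u b⟩
      · have hlt : u < w := lt_of_le_of_ne (leOfHom f) hu
        have hmem : ((Sigma.ι (fun i : Idx G => freeN K i.1) ⟨u, b⟩).app w
            (ModuleCat.freeMk f) : (FreeF G).obj w) ∈ radF G w := by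
          rw [iota_app_mk G ⟨u, b⟩ w f]
          exact (le_iSup (fun p : {u : Nr r // u < w} => LinearMap.range
            ((FreeF G).map (homOfLE p.2.le)).hom) ⟨u, hlt⟩) ⟨_, rfl⟩
        exact Submodule.mem_sup_right hmem
  · exact Submodule.zero_mem _
  · intro y z hy hz; exact Submodule.add_mem _ hy hz

lemma sum_lt_of_lt {u w : Nr r} (h : u < w) : (∑ i, u i) < ∑ i, w i := by
  rw [Pi.lt_def] at h
  obtain ⟨hle, i, hi⟩ := h
  exact Finset.sum_lt_sum (fun j _ => hle j) ⟨i, Finset.mem_univ i, hi⟩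

lemma Phi_app_radF (w : Nr r) {y : (FreeF G).obj w} (hy : y ∈ radF G w) :
    (Phi G).app w y ∈ radSub G w := by
  have hle : radF G w ≤ Submodule.comap
      (show (FreeF G).obj w →ₗ[K] G.obj w from ((Phi G).app w).hom) (radSub G w) := by
    refine iSup_le ?_
    rintro ⟨u, hu⟩ _ ⟨z, rfl⟩
    have hnat := ConcreteCategory.congr_hom ((Phi G).naturality (homOfLE hu.le)) z
    refine Submodule.mem_comap.2 ?_
    rw [show ((Phi G).app w) (((FreeF G).map (homOfLE hu.le)) z)
        = G.map (homOfLE hu.le) ((Phi G).app u z) from hnat]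
    exact Submodule.mem_iSup_of_mem ⟨u, hu⟩ ⟨(Phi G).app u z, rfl⟩
  exact hle hy

noncomputable def TPhi (w : Nr r) : (FreeF G).obj w →ₗ[K] topM G w :=
  (radSub G w).mkQ ∘ₗ (show (FreeF G).obj w →ₗ[K] G.obj w from ((Phi G).app w).hom)

lemma Phi_genAt (w : Nr r) (b : Module.Basis.ofVectorSpaceIndex K (topM G w)) :
    (Phi G).app w (genAt G w b) = liftT G w b := by
  have h := Phi_app_iota G ⟨w, b⟩ w (ModuleCat.freeMk (𝟙 w))
  rw [elemHom_app_mk] at h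
  exact h.trans (by simp)

lemma TPhi_genAt (w : Nr r) (b : Module.Basis.ofVectorSpaceIndex K (topM G w)) :
    TPhi G w (genAt G w b) = (b : topM G w) := by
  rw [TPhi, LinearMap.comp_apply]
  rw [show (show (FreeF G).obj w →ₗ[K] G.obj w from ((Phi G).app w).hom) (genAt G w b)
      = liftT G w b from Phi_genAt G w b]
  rw [Submodule.mkQ_apply, liftT_spec]

lemma TPhi_Theta (w : Nr r) (c : Module.Basis.ofVectorSpaceIndex K (topM G w) →₀ K) :
    TPhi G w (Theta G w c)
      = Finsupp.linearCombination K ((↑) : Module.Basis.ofVectorSpaceIndex K (topM G w) → topM G w) c := by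
  induction c using Finsupp.induction_linear with
  | zero => simp
  | add f g hf hg => rw [map_add, map_add, hf, hg, map_add]
  | single b k =>
    have h1 : (Finsupp.single b k : Module.Basis.ofVectorSpaceIndex K (topM G w) →₀ K)
        = k • Finsupp.single b 1 := by
      rw [Finsupp.smul_single, smul_eq_mul, mul_one]
    rw [h1, map_smul, map_smul, map_smul, Theta_single, TPhi_genAt]
    rw [Finsupp.linearCombination_single, one_smul]

lemma ker_Phi_le_radF (w : Nr r) {x : (FreeF G).obj w}
    (hx : (Phi G).app w x = 0) : x ∈ radF G w := by
  obtain ⟨g, hg, y, hy, rfl⟩ := Submodule.mem_sup.1 (mem_theta_sup_radF G w (x := x))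
  obtain ⟨c, rfl⟩ := hg
  have hTzero : TPhi G w (Theta G w c + y) = 0 := by
    rw [TPhi, LinearMap.comp_apply]
    rw [show (show (FreeF G).obj w →ₗ[K] G.obj w from ((Phi G).app w).hom) (Theta G w c + y)
        = 0 from hx]
    simp
  have hy' : TPhi G w y = 0 := (Submodule.Quotient.mk_eq_zero _).2 (Phi_app_radF G w hy)
  rw [map_add, hy', add_zero, TPhi_Theta] at hTzero
  have hc : c = 0 :=
    linearIndependent_iff.1 (Module.Basis.ofVectorSpaceIndex.linearIndependent K (topM G w)) c hTzero
  rw [hc, map_zero, zero_add]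
  exact hy

lemma Phi_app_surjective : ∀ (n : ℕ) (w : Nr r), (∑ i, w i) = n →
    Function.Surjective ((Phi G).app w) := by
  intro n
  induction n using Nat.strong_induction_on with
  | _ n IH =>
    intro w hw
    set R := LinearMap.range (show (FreeF G).obj w →ₗ[K] G.obj w from ((Phi G).app w).hom) with hR
    have hrad : radSub G w ≤ R := by
      refine iSup_le ?_
      rintro ⟨u, hu⟩ _ ⟨z, rfl⟩
      obtain ⟨z', rfl⟩ := IH (∑ i, u i) (hw ▸ sum_lt_of_lt hu) u rfl z
      have hnat := ConcreteCategory.congr_hom ((Phi G).naturality (homOfLE hu.le)) z'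
      simp only [comp_apply'] at hnat
      exact ⟨(FreeF G).map (homOfLE hu.le) z', hnat⟩
    have hgen : ∀ b : Module.Basis.ofVectorSpaceIndex K (topM G w), liftT G w b ∈ R :=
      fun b => ⟨genAt G w b, Phi_genAt G w b⟩
    have hker : radSub G w ≤ LinearMap.ker R.mkQ := by
      rw [Submodule.ker_mkQ]; exact hrad
    have hzero : Submodule.liftQ (radSub G w) R.mkQ hker = 0 := by
      apply (Module.Basis.ofVectorSpace K (topM G w)).ext
      intro b
      rw [Module.Basis.ofVectorSpace_apply_self, ← liftT_spec G w b, Submodule.liftQ_apply]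
      simpa using (Submodule.Quotient.mk_eq_zero R).2 (hgen b)
    intro g
    have hg0 : R.mkQ g = 0 := by
      have heq : R.mkQ = (Submodule.liftQ (radSub G w) R.mkQ hker) ∘ₗ (radSub G w).mkQ :=
        (Submodule.liftQ_mkQ _ _ _).symm
      rw [heq, hzero]; simp
    exact (Submodule.Quotient.mk_eq_zero R).1 hg0

lemma epi_Phi : Epi (Phi G) := by
  haveI : ∀ X, Epi ((Phi G).app X) := fun X =>
    (ModuleCat.epi_iff_surjective _).2 (Phi_app_surjective G _ X rfl)
  exact NatTrans.epi_of_epi_app _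

lemma Phi_app_injective (s : G ⟶ FreeF G) (hs : s ≫ Phi G = 𝟙 G) :
    ∀ (n : ℕ) (w : Nr r), (∑ i, w i) = n → Function.Injective ((Phi G).app w) := by
  intro n
  induction n using Nat.strong_induction_on with
  | _ n IH =>
    intro w hw
    have hker : ∀ x, (Phi G).app w x = 0 → x = 0 := by
      intro x hx
      have hxr := ker_Phi_le_radF G w hx
      have hfix : x = s.app w ((Phi G).app w x) := by
        refine Submodule.iSup_induction
          (motive := fun y => y = s.app w ((Phi G).app w y)) _ hxr ?_ ?_ ?_
        · rintro ⟨u, hu⟩ _ ⟨z, rfl⟩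
          have hinj := IH (∑ i, u i) (hw ▸ sum_lt_of_lt hu) u rfl
          have h1 : s.app u ((Phi G).app u z) = z := by
            apply hinj
            have hcomp := ConcreteCategory.congr_hom (NatTrans.congr_app hs u) ((Phi G).app u z)
            simp only [NatTrans.comp_app, comp_apply'] at hcomp
            rw [show ((Phi G).app u) ((s.app u) ((Phi G).app u z))
                = (Phi G).app u z from hcomp]
          have hPnat := ConcreteCategory.congr_hom ((Phi G).naturality (homOfLE hu.le)) z
          simp only [comp_apply'] at hPnat
          have hsnat := ConcreteCategory.congr_hom (s.naturality (homOfLE hu.le)) ((Phi G).app u z)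
          simp only [comp_apply'] at hsnat
          calc (FreeF G).map (homOfLE hu.le) z
              = (FreeF G).map (homOfLE hu.le) (s.app u ((Phi G).app u z)) := by rw [h1]
            _ = s.app w (G.map (homOfLE hu.le) ((Phi G).app u z)) := hsnat.symm
            _ = s.app w ((Phi G).app w ((FreeF G).map (homOfLE hu.le) z)) := by rw [hPnat]
        · simp
        · intro a b ha hb
          rw [map_add, map_add]
          exact congrArg₂ (· + ·) ha hb
      rw [hfix, hx, map_zero]
    intro a b hab
    have h0 : (Phi G).app w (a - b) = 0 := by rw [map_sub, hab, sub_self]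
    exact sub_eq_zero.1 (hker _ h0)

lemma mono_Phi (s : G ⟶ FreeF G) (hs : s ≫ Phi G = 𝟙 G) : Mono (Phi G) := by
  haveI : ∀ X, Mono ((Phi G).app X) := fun X =>
    (ModuleCat.mono_iff_injective _).2 (Phi_app_injective G s hs _ X rfl)
  exact NatTrans.mono_of_mono_app _

end ProjFree

theorem projective_isFree' (K : Type) [Field K] (r : ℕ) (F : Nr r ⥤ ModuleCat K)
    (hF : CategoryTheory.Projective F) :
    ∃ (ι : Type) (v : ι → Nr r), Nonempty (F ≅ ∐ fun i => freeN K (v i)) := by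
  classical
  refine ⟨ProjFree.Idx F, fun i => i.1, ⟨?_⟩⟩
  haveI hepi : Epi (ProjFree.Phi F) := ProjFree.epi_Phi F
  have hs : Projective.factorThru (𝟙 F) (ProjFree.Phi F) ≫ ProjFree.Phi F = 𝟙 F :=
    Projective.factorThru_comp _ _
  haveI : Mono (ProjFree.Phi F) := ProjFree.mono_Phi F _ hs
  haveI : IsIso (ProjFree.Phi F) := isIso_of_mono_of_epi _
  exact (asIso (ProjFree.Phi F)).symm

/-- Every projective object in `Fun(ℕ^r, Vect_K)` is free. -/
theorem projective_isFree (K : Type) [Field K] (r : ℕ) (F : Nr r ⥤ ModuleCat K)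
    (hF : Projective F) : IsFreeFunctor K F :=
  projective_isFree' K r F hF
end

section
/- Let V ⊆ Q≥0^r be a cone and {V_ε} the standard noise in the direction of V. The following are equivalent: (1) V_ε is closed under direct sums; (2) the compact part V_ε^c is closed under direct sums; (3) for any w_1, w_2 in V with ‖w_1‖ = ‖w_2‖ = ε, there exists w in V with ‖w‖ = ε, w_1 ≤ w and w_2 ≤ w. -/
open CategoryTheory CategoryTheory.Limits

set_option synthInstance.maxHeartbeats 1000000
set_option maxHeartbeats 1000000

attribute [local instance 2000] Preorder.smallCategory
attribute [local instance] CategoryTheory.Abelian.hasFiniteBiproducts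

/-- The cone generated by `g 0, …, g (n-1)`. -/
def coneOf {r n : ℕ} (g : Fin n → Qr r) : Set (Qr r) :=
  {w | ∃ c : Fin n → ℚ≥0, w = ∑ i, c i • g i}

/-- `V ⊆ ℚ≥0^r` is a cone. -/
def IsCone {r : ℕ} (V : Set (Qr r)) : Prop :=
  ∃ (n : ℕ), 0 < n ∧ ∃ g : Fin n → Qr r, V = coneOf g

/-- The max-norm on `ℚ≥0^r`. -/
def normQ {r : ℕ} (w : Qr r) : ℚ≥0 := Finset.univ.sup w

/-- The `ε`-component of the standard noise in the direction of `V`. -/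
def Veps (K : Type) [Field K] {r : ℕ} (V : Set (Qr r)) (ε : ℚ≥0) :
    Set (Qr r ⥤ ModuleCat K) :=
  {F | IsTame F ∧ ∀ (u : Qr r) (x : F.obj u), ∃ w ∈ V, normQ w = ε ∧
    F.map (homOfLE (show u ≤ u + w from fun _ => le_self_add)) x = 0}

/-! ### Auxiliary material -/

attribute [local instance 10] Classical.propDecidable

universe v

section Aux

variable (K : Type) [Field K]

/-- Submodule of `ULift K`: everything if `¬ w ≤ u`, zero if `w ≤ u`. -/
def nsub {r : ℕ} (w u : Qr r) : Submodule K (ULift.{v} K) where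
  carrier := {x | w ≤ u → x = 0}
  add_mem' := by intro a b ha hb h; rw [ha h, hb h, add_zero]
  zero_mem' := fun _ => rfl
  smul_mem' := by intro c x hx h; rw [hx h, smul_zero]

/-- The "interval" functor attached to `w`. -/
noncomputable def Fw {r : ℕ} (w : Qr r) : Qr r ⥤ ModuleCat.{v} K where
  obj u := ModuleCat.of K (nsub.{v} K w u)
  map {u v'} _ := ModuleCat.ofHom
    { toFun := fun x => ⟨(if w ≤ v' then (0:K) else 1) • x.1, fun hw => by
        rw [if_pos hw, zero_smul]⟩
      map_add' := by intro a b; apply Subtype.ext; simp [smul_add]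
      map_smul' := by intro c a; apply Subtype.ext; simp [smul_comm] }
  map_id := by
    intro u
    refine ModuleCat.hom_ext (LinearMap.ext fun x => Subtype.ext ?_)
    show (if w ≤ u then (0:K) else 1) • x.1 = x.1
    by_cases h : w ≤ u
    · rw [if_pos h, zero_smul, x.2 h]
    · rw [if_neg h, one_smul]
  map_comp := by
    intro u v' t f g
    refine ModuleCat.hom_ext (LinearMap.ext fun x => Subtype.ext ?_)
    show (if w ≤ t then (0:K) else 1) • x.1
       = (if w ≤ t then (0:K) else 1) • ((if w ≤ v' then (0:K) else 1) • x.1)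
    by_cases h : w ≤ t
    · rw [if_pos h, zero_smul, zero_smul]
    · have hv : ¬ w ≤ v' := fun hw => h (hw.trans (leOfHom g))
      rw [if_neg h, if_neg hv, one_smul, one_smul]

theorem Fw_map_apply {r : ℕ} (w : Qr r) {u v' : Qr r} (h : u ≤ v') (x : (Fw.{v} K w).obj u) :
    (((Fw.{v} K w).map (homOfLE h) x : nsub.{v} K w v')).1
      = (if w ≤ v' then (0:K) else 1) • (x : nsub.{v} K w u).1 := rfl

/-- Every coordinate of `w` is a natural multiple of some positive `α`. -/
theorem exists_alpha {r : ℕ} (w : Qr r) : ∃ α : ℚ≥0, 0 < α ∧ ∀ i, ∃ k : ℕ, w i = α * k := by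
  refine ⟨(∏ j, ((w j).den : ℚ≥0))⁻¹, ?_, ?_⟩
  · rw [inv_pos]
    apply Finset.prod_pos
    intro j _
    exact_mod_cast (w j).den_pos
  · intro i
    refine ⟨(w i).num * ∏ j ∈ Finset.univ.erase i, (w j).den, ?_⟩
    have h1 : (∏ j, ((w j).den : ℚ≥0))
        = ((w i).den : ℚ≥0) * ∏ j ∈ Finset.univ.erase i, ((w j).den : ℚ≥0) :=
      (Finset.mul_prod_erase _ _ (Finset.mem_univ i)).symm
    have h2 : ((w i).den : ℚ≥0) ≠ 0 := by
      exact_mod_cast (w i).den_pos.ne'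
    have h3 : (∏ j ∈ Finset.univ.erase i, ((w j).den : ℚ≥0)) ≠ 0 := by
      rw [Finset.prod_ne_zero_iff]
      intro j _
      exact_mod_cast (w j).den_pos.ne'
    have hnum := NNRat.num_div_den (w i)
    rw [div_eq_iff h2] at hnum
    push_cast
    rw [h1, inv_mul_eq_div, eq_div_iff (mul_ne_zero h2 h3), ← mul_assoc, ← hnum]

theorem normQ_eq_zero {r : ℕ} {w : Qr r} (h : normQ w = 0) : w = 0 := by
  funext i
  refine le_antisymm ?_ (zero_le)
  show w i ≤ 0
  rw [← h, normQ]
  exact Finset.le_sup (Finset.mem_univ i)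

theorem not_le_zero_of_ne {r : ℕ} {w : Qr r} (h : w ≠ 0) : ¬ w ≤ (0 : Qr r) := by
  intro hle
  exact h (funext fun i => le_antisymm (hle i) (zero_le))

theorem zero_mem_cone {r : ℕ} {V : Set (Qr r)} (hV : IsCone V) : (0 : Qr r) ∈ V := by
  obtain ⟨n, hn, g, rfl⟩ := hV
  exact ⟨0, by simp⟩

end Aux
section Aux2

variable (K : Type) [Field K]

theorem Fw_tame {r : ℕ} (w : Qr r) : IsTame (Fw.{v} K w) := by
  obtain ⟨α, hα, hcoef⟩ := exists_alpha w
  refine ⟨α, hα, ?_⟩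
  intro v' h
  set b := embQ α (bfloor α v') with hbdef
  have hkey : w ≤ b ↔ w ≤ v' := by
    constructor
    · exact fun hb => hb.trans h
    · intro hwv i
      obtain ⟨k, hk⟩ := hcoef i
      rw [hk]
      show α * (k : ℚ≥0) ≤ α * ((bfloor α v' i : ℕ) : ℚ≥0)
      have hk2 : k ≤ bfloor α v' i := by
        apply Nat.le_floor
        rw [le_div_iff₀ (by exact_mod_cast hα)]
        have h2 := hwv i
        rw [hk] at h2
        have h3 : (α : ℚ) * k ≤ ((v' i : ℚ≥0) : ℚ) := by exact_mod_cast h2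
        linarith
      exact mul_le_mul_of_nonneg_left (by exact_mod_cast hk2) (zero_le)
  refine ⟨ModuleCat.ofHom
    { toFun := fun x => (⟨x.1, fun hb => x.2 (hb.trans h)⟩ : nsub.{v} K w b)
      map_add' := by intro a b; rfl
      map_smul' := by intro c a; rfl }, ?_, ?_⟩
  · refine ModuleCat.hom_ext (LinearMap.ext fun x => Subtype.ext ?_)
    show (if w ≤ v' then (0:K) else 1) • x.1 = x.1
    by_cases hwv : w ≤ v'
    · rw [if_pos hwv, zero_smul, x.2 (hkey.mpr hwv)]
    · rw [if_neg hwv, one_smul]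
  · refine ModuleCat.hom_ext (LinearMap.ext fun x => Subtype.ext ?_)
    show (if w ≤ v' then (0:K) else 1) • x.1 = x.1
    by_cases hwv : w ≤ v'
    · rw [if_pos hwv, zero_smul, x.2 hwv]
    · rw [if_neg hwv, one_smul]

theorem Fw_mem_Veps {r : ℕ} {V : Set (Qr r)} {ε : ℚ≥0} {w : Qr r} (hw : w ∈ V)
    (hn : normQ w = ε) : Fw.{v} K w ∈ Veps K V ε := by
  refine ⟨Fw_tame K w, ?_⟩
  intro u x
  refine ⟨w, hw, hn, ?_⟩
  apply Subtype.ext (p := (· ∈ nsub.{v} K w (u + w)))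
  rw [Fw_map_apply, if_pos (le_add_self : w ≤ u + w), zero_smul]
  rfl

theorem Fw_compact {r : ℕ} (w : Qr r) : IsCompactFunctor K (Fw.{v} K w) := by
  intro S hmono hsup
  by_cases hw : w = 0
  · refine ⟨0, fun u => ?_⟩
    rw [eq_top_iff]
    intro x _
    have hx : x = 0 := Subtype.ext (x.2 (hw ▸ (fun i => zero_le)))
    rw [hx]
    exact zero_mem _
  · have h0 : ¬ w ≤ (0 : Qr r) := not_le_zero_of_ne hw
    set e : (Fw.{v} K w).obj 0 := (⟨ULift.up (1:K), fun h => absurd h h0⟩ : nsub.{v} K w 0) with he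
    have hdir : Directed (· ≤ ·) (fun n => (S n).toFun 0) :=
      (monotone_nat_of_le_succ (fun n => hmono n 0)).directed_le
    have hmem : e ∈ ⨆ n, (S n).toFun 0 := by rw [hsup 0]; trivial
    obtain ⟨k, hk⟩ := (Submodule.mem_iSup_of_directed _ hdir).mp hmem
    refine ⟨k, fun u => ?_⟩
    rw [eq_top_iff]
    intro x _
    by_cases hu : w ≤ u
    · have hx : x = 0 := Subtype.ext (x.2 hu)
      rw [hx]
      exact zero_mem _
    · have h0u : (0 : Qr r) ≤ u := fun i => zero_le
      have himg : (Fw.{v} K w).map (homOfLE h0u) e ∈ (S k).toFun u :=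
        (S k).map_le (homOfLE h0u) ⟨e, hk, rfl⟩
      have hx : x = x.1.down • ((Fw.{v} K w).map (homOfLE h0u) e) := by
        apply Subtype.ext
        show x.1 = x.1.down • ((if w ≤ u then (0:K) else 1) • ULift.up (1:K))
        rw [if_neg hu, one_smul]
        apply ULift.down_injective
        show x.1.down = x.1.down • (1:K)
        rw [smul_eq_mul, mul_one]
      rw [hx]
      exact Submodule.smul_mem _ _ himg

end Aux2
section Aux3

variable (K : Type) [Field K] {r : ℕ}

theorem biprod_app_total (F G : Qr r ⥤ ModuleCat.{v} K) (u : Qr r) :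
    (biprod.fst (X := F) (Y := G)).app u ≫ (biprod.inl (X := F) (Y := G)).app u
      + (biprod.snd (X := F) (Y := G)).app u ≫ (biprod.inr (X := F) (Y := G)).app u
      = 𝟙 ((F ⊞ G).obj u) := by
  have h := congrArg (fun (t : F ⊞ G ⟶ F ⊞ G) => t.app u) (biprod.total (X := F) (Y := G))
  simp only [NatTrans.app_add, NatTrans.comp_app, NatTrans.id_app] at h
  exact h

theorem biprod_decomp (F G : Qr r ⥤ ModuleCat.{v} K) (u : Qr r) (x : (F ⊞ G).obj u) :
    (biprod.inl (X := F) (Y := G)).app u ((biprod.fst (X := F) (Y := G)).app u x)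
      + (biprod.inr (X := F) (Y := G)).app u ((biprod.snd (X := F) (Y := G)).app u x) = x := by
  have h := congrArg (fun (f : (F ⊞ G).obj u ⟶ (F ⊞ G).obj u) => f x) (biprod_app_total K F G u)
  simp only [ModuleCat.hom_add, LinearMap.add_apply, ModuleCat.comp_apply, Function.comp_apply,
    ModuleCat.id_apply] at h
  exact h

theorem biprod_obj_ext (F G : Qr r ⥤ ModuleCat.{v} K) (u : Qr r) (x : (F ⊞ G).obj u)
    (h1 : (biprod.fst (X := F) (Y := G)).app u x = 0)
    (h2 : (biprod.snd (X := F) (Y := G)).app u x = 0) : x = 0 := by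
  have h := biprod_decomp K F G u x
  rw [h1, h2, map_zero, map_zero, add_zero] at h
  exact h.symm

theorem biprod_fst_app_map (F G : Qr r ⥤ ModuleCat.{v} K) {u v' : Qr r} (h : u ⟶ v')
    (x : (F ⊞ G).obj u) :
    (biprod.fst (X := F) (Y := G)).app v' ((F ⊞ G).map h x)
      = F.map h ((biprod.fst (X := F) (Y := G)).app u x) := by
  have hn := congrArg (fun (f : (F ⊞ G).obj u ⟶ F.obj v') => f x)
    ((biprod.fst (X := F) (Y := G)).naturality h)
  simp only [ModuleCat.comp_apply, Function.comp_apply] at hn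
  exact hn

theorem biprod_snd_app_map (F G : Qr r ⥤ ModuleCat.{v} K) {u v' : Qr r} (h : u ⟶ v')
    (x : (F ⊞ G).obj u) :
    (biprod.snd (X := F) (Y := G)).app v' ((F ⊞ G).map h x)
      = G.map h ((biprod.snd (X := F) (Y := G)).app u x) := by
  have hn := congrArg (fun (f : (F ⊞ G).obj u ⟶ G.obj v') => f x)
    ((biprod.snd (X := F) (Y := G)).naturality h)
  simp only [ModuleCat.comp_apply, Function.comp_apply] at hn
  exact hn

theorem biprod_inl_app_map (F G : Qr r ⥤ ModuleCat.{v} K) {u v' : Qr r} (h : u ⟶ v')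
    (a : F.obj u) :
    (F ⊞ G).map h ((biprod.inl (X := F) (Y := G)).app u a)
      = (biprod.inl (X := F) (Y := G)).app v' (F.map h a) := by
  have hn := congrArg (fun (f : F.obj u ⟶ (F ⊞ G).obj v') => f a)
    ((biprod.inl (X := F) (Y := G)).naturality h)
  simp only [ModuleCat.comp_apply, Function.comp_apply] at hn
  exact hn.symm

theorem biprod_inr_app_map (F G : Qr r ⥤ ModuleCat.{v} K) {u v' : Qr r} (h : u ⟶ v')
    (a : G.obj u) :
    (F ⊞ G).map h ((biprod.inr (X := F) (Y := G)).app u a)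
      = (biprod.inr (X := F) (Y := G)).app v' (G.map h a) := by
  have hn := congrArg (fun (f : G.obj u ⟶ (F ⊞ G).obj v') => f a)
    ((biprod.inr (X := F) (Y := G)).naturality h)
  simp only [ModuleCat.comp_apply, Function.comp_apply] at hn
  exact hn.symm

theorem biprod_fst_inl_app (F G : Qr r ⥤ ModuleCat.{v} K) (u : Qr r) (a : F.obj u) :
    (biprod.fst (X := F) (Y := G)).app u ((biprod.inl (X := F) (Y := G)).app u a) = a := by
  have hn := congrArg (fun (t : F ⟶ F) => t.app u a) (biprod.inl_fst (X := F) (Y := G))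
  simp only [NatTrans.comp_app, NatTrans.id_app, ModuleCat.comp_apply, Function.comp_apply,
    ModuleCat.id_apply] at hn
  exact hn

theorem biprod_fst_inr_app (F G : Qr r ⥤ ModuleCat.{v} K) (u : Qr r) (a : G.obj u) :
    (biprod.fst (X := F) (Y := G)).app u ((biprod.inr (X := F) (Y := G)).app u a) = 0 := by
  have hn := congrArg (fun (t : G ⟶ F) => t.app u a) (biprod.inr_fst (X := F) (Y := G))
  simp only [NatTrans.comp_app, ModuleCat.comp_apply, Function.comp_apply, zero_app,
    ModuleCat.hom_zero, LinearMap.zero_apply] at hn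
  exact hn

theorem biprod_snd_inl_app (F G : Qr r ⥤ ModuleCat.{v} K) (u : Qr r) (a : F.obj u) :
    (biprod.snd (X := F) (Y := G)).app u ((biprod.inl (X := F) (Y := G)).app u a) = 0 := by
  have hn := congrArg (fun (t : F ⟶ G) => t.app u a) (biprod.inl_snd (X := F) (Y := G))
  simp only [NatTrans.comp_app, ModuleCat.comp_apply, Function.comp_apply, zero_app,
    ModuleCat.hom_zero, LinearMap.zero_apply] at hn
  exact hn

theorem biprod_snd_inr_app (F G : Qr r ⥤ ModuleCat.{v} K) (u : Qr r) (a : G.obj u) :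
    (biprod.snd (X := F) (Y := G)).app u ((biprod.inr (X := F) (Y := G)).app u a) = a := by
  have hn := congrArg (fun (t : G ⟶ G) => t.app u a) (biprod.inr_snd (X := F) (Y := G))
  simp only [NatTrans.comp_app, NatTrans.id_app, ModuleCat.comp_apply, Function.comp_apply,
    ModuleCat.id_apply] at hn
  exact hn

theorem biprod_map_isIso (F G : Qr r ⥤ ModuleCat.{v} K) {u v' : Qr r} (h : u ⟶ v')
    (hF : IsIso (F.map h)) (hG : IsIso (G.map h)) : IsIso ((F ⊞ G).map h) := by
  have e1 := congrArg (fun (f : F.obj u ⟶ F.obj u) => f) (IsIso.hom_inv_id (F.map h))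
  refine ⟨(biprod.fst (X := F) (Y := G)).app v' ≫ inv (F.map h)
      ≫ (biprod.inl (X := F) (Y := G)).app u
    + (biprod.snd (X := F) (Y := G)).app v' ≫ inv (G.map h)
      ≫ (biprod.inr (X := F) (Y := G)).app u, ?_, ?_⟩
  · refine ModuleCat.hom_ext (LinearMap.ext fun x => ?_)
    show (biprod.inl (X := F) (Y := G)).app u
          (inv (F.map h) ((biprod.fst (X := F) (Y := G)).app v' ((F ⊞ G).map h x)))
        + (biprod.inr (X := F) (Y := G)).app u
          (inv (G.map h) ((biprod.snd (X := F) (Y := G)).app v' ((F ⊞ G).map h x))) = x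
    rw [biprod_fst_app_map, biprod_snd_app_map]
    have e1 := congrArg (fun (f : F.obj u ⟶ F.obj u)
        => f ((biprod.fst (X := F) (Y := G)).app u x)) (IsIso.hom_inv_id (F.map h))
    have e2 := congrArg (fun (f : G.obj u ⟶ G.obj u)
        => f ((biprod.snd (X := F) (Y := G)).app u x)) (IsIso.hom_inv_id (G.map h))
    simp only [ModuleCat.comp_apply, Function.comp_apply, ModuleCat.id_apply] at e1 e2
    rw [e1, e2]
    exact biprod_decomp K F G u x
  · refine ModuleCat.hom_ext (LinearMap.ext fun x => ?_)
    show (F ⊞ G).map h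
        ((biprod.inl (X := F) (Y := G)).app u
            (inv (F.map h) ((biprod.fst (X := F) (Y := G)).app v' x))
          + (biprod.inr (X := F) (Y := G)).app u
            (inv (G.map h) ((biprod.snd (X := F) (Y := G)).app v' x))) = x
    rw [map_add, biprod_inl_app_map, biprod_inr_app_map]
    have e1 := congrArg (fun (f : F.obj v' ⟶ F.obj v')
        => f ((biprod.fst (X := F) (Y := G)).app v' x)) (IsIso.inv_hom_id (F.map h))
    have e2 := congrArg (fun (f : G.obj v' ⟶ G.obj v')
        => f ((biprod.snd (X := F) (Y := G)).app v' x)) (IsIso.inv_hom_id (G.map h))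
    simp only [ModuleCat.comp_apply, Function.comp_apply, ModuleCat.id_apply] at e1 e2
    rw [e1, e2]
    exact biprod_decomp K F G v' x

end Aux3
section Aux4

theorem isAlphaTame_div {C : Type*} [Category C] {r : ℕ} {G : Qr r ⥤ C} {α : ℚ≥0}
    (hα : 0 < α) {n : ℕ} (hn : 0 < n) (hG : IsAlphaTame α G) :
    IsAlphaTame (α / n) G := by
  set γ := α / n with hγ
  have hγ0 : (0:ℚ≥0) < γ := div_pos hα (by exact_mod_cast hn)
  have hne : ((n : ℚ≥0)) ≠ 0 := by exact_mod_cast hn.ne'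
  have hαγ : α = γ * n := by rw [hγ, div_mul_cancel₀ _ hne]
  have f1 : ∀ (v : Qr r) (i : Fin r), bfloor α v i = bfloor γ v i / n := by
    intro v i
    show Nat.floor ((v i : ℚ) / (α : ℚ)) = Nat.floor ((v i : ℚ) / (γ : ℚ)) / n
    rw [hαγ]
    push_cast
    rw [← div_div, Nat.floor_div_natCast]
  have f2 : ∀ v : Qr r, embQ α (bfloor α v) ≤ embQ γ (bfloor γ v) := by
    intro v i
    show α * ((bfloor α v i : ℕ) : ℚ≥0) ≤ γ * ((bfloor γ v i : ℕ) : ℚ≥0)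
    rw [f1 v i, hαγ, mul_assoc]
    apply mul_le_mul_of_nonneg_left _ zero_le
    have hd : (bfloor γ v i / n) * n ≤ bfloor γ v i := Nat.div_mul_le_self _ _
    calc (n : ℚ≥0) * ((bfloor γ v i / n : ℕ) : ℚ≥0)
        = (((bfloor γ v i / n) * n : ℕ) : ℚ≥0) := by push_cast; ring
      _ ≤ ((bfloor γ v i : ℕ) : ℚ≥0) := by exact_mod_cast hd
  have f3 : ∀ v : Qr r, bfloor α (embQ γ (bfloor γ v)) = bfloor α v := by
    intro v
    funext i
    show Nat.floor (((embQ γ (bfloor γ v)) i : ℚ) / (α : ℚ)) = bfloor α v i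
    have : ((embQ γ (bfloor γ v)) i : ℚ) = (γ : ℚ) * (bfloor γ v i : ℕ) := by
      show (((γ * ((bfloor γ v i : ℕ) : ℚ≥0)) : ℚ≥0) : ℚ) = _
      push_cast
      ring
    rw [f1 v i, this, hαγ]
    push_cast
    rw [mul_div_mul_left _ _ (show (γ:ℚ) ≠ 0 by exact_mod_cast hγ0.ne')]
    rw [Nat.floor_div_natCast, Nat.floor_natCast]
  intro v h
  have hab : embQ α (bfloor α v) ≤ embQ γ (bfloor γ v) := f2 v
  have key : ∀ (a : Qr r) (ha : a ≤ embQ γ (bfloor γ v)),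
      a = embQ α (bfloor α (embQ γ (bfloor γ v))) → IsIso (G.map (homOfLE ha)) := by
    rintro a ha rfl
    exact hG _ ha
  have h2 : IsIso (G.map (homOfLE hab)) :=
    key _ hab (by rw [f3 v])
  have h1 : IsIso (G.map (homOfLE (hab.trans h))) := hG v (hab.trans h)
  have hcomp : G.map (homOfLE hab) ≫ G.map (homOfLE h) = G.map (homOfLE (hab.trans h)) := by
    rw [← G.map_comp]
    rfl
  have h3 : IsIso (G.map (homOfLE hab) ≫ G.map (homOfLE h)) := by
    rw [hcomp]; exact h1
  exact IsIso.of_isIso_comp_left (G.map (homOfLE hab)) (G.map (homOfLE h))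

theorem exists_common_divisor (α β : ℚ≥0) (hα : 0 < α) (hβ : 0 < β) :
    ∃ (γ : ℚ≥0) (n m : ℕ), 0 < γ ∧ 0 < n ∧ 0 < m ∧ γ = α / n ∧ γ = β / m := by
  set q := α / β with hq
  have hq0 : 0 < q := div_pos hα hβ
  have hnum : 0 < q.num := by
    rw [NNRat.num_pos]
    exact hq0
  have hden : 0 < q.den := q.den_pos
  refine ⟨α / q.num, q.num, q.den, ?_, hnum, hden, rfl, ?_⟩
  · exact div_pos hα (by exact_mod_cast hnum)
  · have h1 : ((q.num : ℚ≥0)) ≠ 0 := by exact_mod_cast hnum.ne'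
    have h2 : ((q.den : ℚ≥0)) ≠ 0 := by exact_mod_cast hden.ne'
    rw [div_eq_div_iff h1 h2]
    have h4 := NNRat.num_div_den q
    rw [div_eq_iff h2] at h4
    rw [h4, hq, ← mul_assoc]
    have h5 : β * (α / β) = α := by field_simp
    rw [h5]

end Aux4
section Aux5

theorem normQ_zero {r : ℕ} : normQ (0 : Qr r) = 0 := by
  refine le_antisymm ?_ (zero_le)
  apply Finset.sup_le
  intro i _
  exact le_rfl

theorem veps_sum_mem {K : Type} [Field K] {r : ℕ} {V : Set (Qr r)} {ε : ℚ≥0}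
    (hR : ∀ w₁ w₂, w₁ ∈ V → w₂ ∈ V → normQ w₁ = ε → normQ w₂ = ε →
      ∃ w ∈ V, normQ w = ε ∧ w₁ ≤ w ∧ w₂ ≤ w)
    (F G : Qr r ⥤ ModuleCat.{v} K) (hF : F ∈ Veps K V ε) (hG : G ∈ Veps K V ε) :
    (F ⊞ G) ∈ Veps K V ε := by
  obtain ⟨⟨α, hα, hFt⟩, hFn⟩ := hF
  obtain ⟨⟨β, hβ, hGt⟩, hGn⟩ := hG
  constructor
  · obtain ⟨γ, n, m, hγ, hn, hm, hγn, hγm⟩ := exists_common_divisor α β hα hβ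
    refine ⟨γ, hγ, ?_⟩
    have hFγ : IsAlphaTame γ F := by rw [hγn]; exact isAlphaTame_div hα hn hFt
    have hGγ : IsAlphaTame γ G := by rw [hγm]; exact isAlphaTame_div hβ hm hGt
    intro v h
    exact biprod_map_isIso K F G (homOfLE h) (hFγ v h) (hGγ v h)
  · intro u x
    obtain ⟨w₁, hw₁V, hw₁n, hx₁⟩ := hFn u ((biprod.fst (X := F) (Y := G)).app u x)
    obtain ⟨w₂, hw₂V, hw₂n, hx₂⟩ := hGn u ((biprod.snd (X := F) (Y := G)).app u x)
    obtain ⟨w, hwV, hwn, h1w, h2w⟩ := hR w₁ w₂ hw₁V hw₂V hw₁n hw₂n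
    refine ⟨w, hwV, hwn, ?_⟩
    refine biprod_obj_ext K F G _ _ ?_ ?_
    · rw [biprod_fst_app_map]
      have hsplit : F.map (homOfLE (show u ≤ u + w from fun _ => le_self_add))
          = F.map (homOfLE (show u ≤ u + w₁ from fun _ => le_self_add))
            ≫ F.map (homOfLE (show u + w₁ ≤ u + w from add_le_add_right h1w u)) := by
        rw [← F.map_comp]
        rfl
      rw [hsplit]
      simp only [ModuleCat.comp_apply, Function.comp_apply]
      rw [hx₁, map_zero]
    · rw [biprod_snd_app_map]
      have hsplit : G.map (homOfLE (show u ≤ u + w from fun _ => le_self_add))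
          = G.map (homOfLE (show u ≤ u + w₂ from fun _ => le_self_add))
            ≫ G.map (homOfLE (show u + w₂ ≤ u + w from add_le_add_right h2w u)) := by
        rw [← G.map_comp]
        rfl
      rw [hsplit]
      simp only [ModuleCat.comp_apply, Function.comp_apply]
      rw [hx₂, map_zero]

theorem common_bound_of_closed {K : Type} [Field K] {r : ℕ} {V : Set (Qr r)}
    (hV : IsCone V) {ε : ℚ≥0}
    (hcl : ∀ F G : Qr r ⥤ ModuleCat.{v} K,
      F ∈ Veps K V ε → IsCompactFunctor K F → G ∈ Veps K V ε → IsCompactFunctor K G →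
        (F ⊞ G) ∈ Veps K V ε) :
    ∀ w₁ w₂, w₁ ∈ V → w₂ ∈ V → normQ w₁ = ε → normQ w₂ = ε →
      ∃ w ∈ V, normQ w = ε ∧ w₁ ≤ w ∧ w₂ ≤ w := by
  intro w₁ w₂ h1V h2V h1n h2n
  by_cases hε : ε = 0
  · subst hε
    refine ⟨0, zero_mem_cone hV, normQ_zero, ?_, ?_⟩
    · rw [normQ_eq_zero h1n]
    · rw [normQ_eq_zero h2n]
  · have h10 : w₁ ≠ 0 := by
      intro h
      exact hε (by rw [← h1n, h, normQ_zero])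
    have h20 : w₂ ≠ 0 := by
      intro h
      exact hε (by rw [← h2n, h, normQ_zero])
    have hmem := hcl (Fw.{v} K w₁) (Fw.{v} K w₂)
      (Fw_mem_Veps K h1V h1n) (Fw_compact K w₁)
      (Fw_mem_Veps K h2V h2n) (Fw_compact K w₂)
    obtain ⟨-, hnoise⟩ := hmem
    set e₁ : (Fw.{v} K w₁).obj 0 := (⟨ULift.up 1, fun h => absurd h (not_le_zero_of_ne h10)⟩ : nsub.{v} K w₁ 0)
      with he₁
    set e₂ : (Fw.{v} K w₂).obj 0 := (⟨ULift.up 1, fun h => absurd h (not_le_zero_of_ne h20)⟩ : nsub.{v} K w₂ 0)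
      with he₂
    set x : (Fw.{v} K w₁ ⊞ Fw.{v} K w₂).obj 0 :=
      (biprod.inl (X := Fw.{v} K w₁) (Y := Fw.{v} K w₂)).app 0 e₁
        + (biprod.inr (X := Fw.{v} K w₁) (Y := Fw.{v} K w₂)).app 0 e₂ with hx
    obtain ⟨w, hwV, hwn, hx0⟩ := hnoise 0 x
    have h0w : (0 : Qr r) + w = w := by funext i; exact zero_add _
    refine ⟨w, hwV, hwn, ?_, ?_⟩
    · -- w₁ ≤ w
      have h1 := congrArg ((biprod.fst (X := Fw.{v} K w₁) (Y := Fw.{v} K w₂)).app (0 + w)) hx0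
      rw [map_zero, biprod_fst_app_map] at h1
      have hfst : (biprod.fst (X := Fw.{v} K w₁) (Y := Fw.{v} K w₂)).app 0 x = e₁ := by
        rw [hx, map_add, biprod_fst_inl_app, biprod_fst_inr_app, add_zero]
      rw [hfst] at h1
      by_cases hc : w₁ ≤ 0 + w
      · intro i
        have := hc i
        rw [h0w] at this
        exact this
      · exfalso
        have hval := congrArg (Subtype.val (p := (· ∈ nsub.{v} K w₁ (0 + w)))) h1
        rw [Fw_map_apply, if_neg hc, one_smul] at hval
        have hdown := congrArg ULift.down hval
        exact one_ne_zero hdown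
    · -- w₂ ≤ w
      have h1 := congrArg ((biprod.snd (X := Fw.{v} K w₁) (Y := Fw.{v} K w₂)).app (0 + w)) hx0
      rw [map_zero, biprod_snd_app_map] at h1
      have hsnd : (biprod.snd (X := Fw.{v} K w₁) (Y := Fw.{v} K w₂)).app 0 x = e₂ := by
        rw [hx, map_add, biprod_snd_inl_app, biprod_snd_inr_app, zero_add]
      rw [hsnd] at h1
      by_cases hc : w₂ ≤ 0 + w
      · intro i
        have := hc i
        rw [h0w] at this
        exact this
      · exfalso
        have hval := congrArg (Subtype.val (p := (· ∈ nsub.{v} K w₂ (0 + w)))) h1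
        rw [Fw_map_apply, if_neg hc, one_smul] at hval
        have hdown := congrArg ULift.down hval
        exact one_ne_zero hdown

end Aux5
/-- For the standard noise in the direction of a cone `V`, the following are equivalent:
(1) `V_ε` is closed under direct sums; (2) its compact part `V_ε^c` is closed under direct
sums; (3) any two vectors of `V` of norm `ε` admit a common upper bound in `V` of norm `ε`. -/
theorem standardNoise_closed_directSums_iff (K : Type) [Field K] (r : ℕ)
    (V : Set (Qr r)) (hV : IsCone V) (ε : ℚ≥0) :
    ((∀ F G : Qr r ⥤ ModuleCat K, F ∈ Veps K V ε → G ∈ Veps K V ε →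
        (F ⊞ G) ∈ Veps K V ε) ↔
      (∀ w₁ w₂, w₁ ∈ V → w₂ ∈ V → normQ w₁ = ε → normQ w₂ = ε →
        ∃ w ∈ V, normQ w = ε ∧ w₁ ≤ w ∧ w₂ ≤ w)) ∧
    ((∀ F G : Qr r ⥤ ModuleCat K,
        F ∈ Veps K V ε → IsCompactFunctor K F → G ∈ Veps K V ε → IsCompactFunctor K G →
          (F ⊞ G) ∈ Veps K V ε) ↔
      (∀ w₁ w₂, w₁ ∈ V → w₂ ∈ V → normQ w₁ = ε → normQ w₂ = ε →
        ∃ w ∈ V, normQ w = ε ∧ w₁ ≤ w ∧ w₂ ≤ w)) := by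
  constructor
  · constructor
    · intro h1
      exact common_bound_of_closed hV (fun F G hF _ hG _ => h1 F G hF hG)
    · intro hR F G hF hG
      exact veps_sum_mem hR F G hF hG
  · constructor
    · intro h2
      exact common_bound_of_closed hV h2
    · intro hR F G hF _ hG _
      exact veps_sum_mem hR F G hF hG
end
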